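/- arXiv:2401.11680 — 2 statements merged into one kernel-verified Lean document; each statement's English description precedes it below -/
import Mathlib

section
/- For any preference order σ ∈ {±1}^n, the maximal number of napkinless diners equals the maximal balance number over all bench collections: ν_max(σ) = max over bench collections β of b(β,σ). -/
namespace Napkin

variable {n q : ℕ}

/-- The napkin to the left of seat `s`; napkin `s` itself is the one to the right of
seat `s`, placed between seats `s` and `s + 1` around the circular table. -/
def leftNapkin (s : Fin n) : Fin n := ⟨((s : ℕ) + (n - 1)) % n, Nat.mod_lt _ s.pos⟩

/-- Process the diners `0, 1, …, n-1` in their arrival order.  Here `w i = j` means that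
diner `j` sits in seat `i` (so diner `j` sits in seat `w.symm j`), and `σ j = true`
means diner `j` prefers the napkin to their right.  Each diner takes their preferred
adjacent napkin if it is unclaimed, otherwise the other adjacent napkin if it is
unclaimed, and otherwise is napkinless.  The returned state consists of the set of
claimed napkins and the set of napkinless diners. -/
def dine (σ : Fin n → Bool) (w : Equiv.Perm (Fin n)) :
    Finset (Fin n) × Finset (Fin n) :=
  (List.finRange n).foldl
    (fun st j =>
      let s := w.symm j
      let pref := if σ j then s else leftNapkin s
      let other := if σ j then leftNapkin s else s
      if pref ∉ st.1 then (insert pref st.1, st.2)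
      else if other ∉ st.1 then (insert other st.1, st.2)
      else (st.1, insert j st.2))
    (∅, ∅)

/-- The set of napkinless diners for the seating arrangement `(w, σ)`. -/
def napkinless (σ : Fin n → Bool) (w : Equiv.Perm (Fin n)) : Finset (Fin n) :=
  (dine σ w).2

/-- `ν(w,σ)`, the number of napkinless diners. -/
def nu (σ : Fin n → Bool) (w : Equiv.Perm (Fin n)) : ℕ := (napkinless σ w).card

/-- A seating order puts diner `1` in seat `1` (index `0` here). -/
def IsSeating (w : Equiv.Perm (Fin n)) : Prop :=
  ∀ i : Fin n, (i : ℕ) = 0 → (w i : ℕ) = 0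

instance : DecidablePred (IsSeating (n := n)) := fun w =>
  decidable_of_iff (∀ i : Fin n, (i : ℕ) = 0 → (w i : ℕ) = 0) Iff.rfl

/-- `ν_max(σ)`, the maximal number of napkinless diners over all seating orders. -/
def nuMax (σ : Fin n → Bool) : ℕ :=
  (Finset.univ.filter fun w : Equiv.Perm (Fin n) => IsSeating w).sup (nu σ)

/-- The value `±1` of a napkin preference. -/
def sign (b : Bool) : ℤ := if b then 1 else -1

/-- The drift `h(σ) = max(0, max over prefixes of σ₁ + ⋯ + σᵢ)`. -/
def drift (σ : Fin n → Bool) : ℕ :=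
  (Finset.range (n + 1)).sup fun i =>
    (∑ j ∈ Finset.univ.filter (fun j : Fin n => (j : ℕ) < i), sign (σ j)).toNat

/-- A bench collection: `q` pairwise disjoint triples `aᵢ < bᵢ < cᵢ` in `{1,…,n}`. -/
structure BenchCollection (n q : ℕ) where
  a : Fin q → Fin n
  b : Fin q → Fin n
  c : Fin q → Fin n
  hab : ∀ i, a i < b i
  hbc : ∀ i, b i < c i
  disj : ∀ i j : Fin q, i ≠ j →
    Disjoint ({a i, b i, c i} : Finset (Fin n)) ({a j, b j, c j} : Finset (Fin n))

/-- A bench is balanced when its two smallest members have opposite preferences. -/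
def Balanced (σ : Fin n → Bool) (β : BenchCollection n q) (i : Fin q) : Prop :=
  sign (σ (β.a i)) + sign (σ (β.b i)) = 0

instance (σ : Fin n → Bool) (β : BenchCollection n q) :
    DecidablePred (Balanced σ β) := fun i =>
  decidable_of_iff (sign (σ (β.a i)) + sign (σ (β.b i)) = 0) Iff.rfl

/-- `b(β,σ)`, the number of balanced benches of `β`. -/
def balance (σ : Fin n → Bool) (β : BenchCollection n q) : ℕ :=
  (Finset.univ.filter fun i => Balanced σ β i).card

lemma val_add_one [NeZero n] (m : Fin n) : ((m + 1 : Fin n) : ℕ) = (m.val + 1) % n := by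
  rw [Fin.add_def, Fin.val_one']
  exact Nat.add_mod_mod m.val 1 n

lemma leftNapkin_add_one [NeZero n] (m : Fin n) : leftNapkin (m + 1) = m := by
  have hn : 0 < n := m.pos
  apply Fin.ext
  show ((m + 1 : Fin n).val + (n-1)) % n = m.val
  rw [val_add_one, Nat.mod_add_mod]
  have : m.val + 1 + (n - 1) = m.val + n := by omega
  rw [this, Nat.add_mod_right, Nat.mod_eq_of_lt m.isLt]

lemma leftNapkin_surj : Function.Surjective (leftNapkin (n := n)) := by
  intro m
  haveI : NeZero n := ⟨m.pos.ne'⟩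
  exact ⟨m + 1, leftNapkin_add_one m⟩

lemma leftNapkin_inj : Function.Injective (leftNapkin (n := n)) :=
  Finite.injective_iff_surjective.mpr leftNapkin_surj

lemma eq_add_one_of_leftNapkin_eq [NeZero n] {s m : Fin n} (h : leftNapkin s = m) :
    s = m + 1 := leftNapkin_inj (h.trans (leftNapkin_add_one m).symm)



variable {n : ℕ} (σ : Fin n → Bool) (w : Equiv.Perm (Fin n))

/-- One step of dining. -/
def step (st : Finset (Fin n) × Finset (Fin n)) (j : Fin n) :
    Finset (Fin n) × Finset (Fin n) :=
  let s := w.symm j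
  let pref := if σ j then s else leftNapkin s
  let other := if σ j then leftNapkin s else s
  if pref ∉ st.1 then (insert pref st.1, st.2)
  else if other ∉ st.1 then (insert other st.1, st.2)
  else (st.1, insert j st.2)

def stateAt (t : ℕ) : Finset (Fin n) × Finset (Fin n) :=
  ((List.finRange n).take t).foldl (step σ w) (∅, ∅)

lemma dine_eq_stateAt : dine σ w = stateAt σ w n := by
  unfold dine stateAt step
  rw [List.take_of_length_le (by simp)]

lemma stateAt_succ {t : ℕ} (h : t < n) :
    stateAt σ w (t + 1) = step σ w (stateAt σ w t) ⟨t, h⟩ := by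
  unfold stateAt
  rw [List.take_succ]
  have : (List.finRange n)[t]? = some ⟨t, h⟩ := by
    rw [List.getElem?_eq_getElem (by simpa using h)]
    simp
  rw [this]
  simp

/-- The seat of diner `j`. -/
def seatOf (j : Fin n) : Fin n := w.symm j

/-- The preferred napkin of diner `j`. -/
def prefN (j : Fin n) : Fin n :=
  if σ j then seatOf w j else leftNapkin (seatOf w j)

/-- The non-preferred adjacent napkin of diner `j`. -/
def othN (j : Fin n) : Fin n :=
  if σ j then leftNapkin (seatOf w j) else seatOf w j

/-- The napkin taken by diner `j`, if any. -/
def took (j : Fin n) : Option (Fin n) :=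
  if prefN σ w j ∉ (stateAt σ w j.val).1 then some (prefN σ w j)
  else if othN σ w j ∉ (stateAt σ w j.val).1 then some (othN σ w j)
  else none

lemma step_eq (st : Finset (Fin n) × Finset (Fin n)) (j : Fin n) :
    step σ w st j =
      if prefN σ w j ∉ st.1 then (insert (prefN σ w j) st.1, st.2)
      else if othN σ w j ∉ st.1 then (insert (othN σ w j) st.1, st.2)
      else (st.1, insert j st.2) := rfl

lemma mem_fst_succ {t : ℕ} (h : t < n) (m : Fin n) :
    m ∈ (stateAt σ w (t + 1)).1 ↔
      m ∈ (stateAt σ w t).1 ∨ took σ w ⟨t, h⟩ = some m := by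
  rw [stateAt_succ σ w h, step_eq, took]
  have : (⟨t, h⟩ : Fin n).val = t := rfl
  rw [this]
  split_ifs with h1 h2 <;>
    simp only [Finset.mem_insert, Option.some.injEq, reduceCtorEq, or_false] <;>
    aesop

lemma mem_snd_succ {t : ℕ} (h : t < n) (j : Fin n) :
    j ∈ (stateAt σ w (t + 1)).2 ↔
      j ∈ (stateAt σ w t).2 ∨ (j = ⟨t, h⟩ ∧ took σ w ⟨t, h⟩ = none) := by
  rw [stateAt_succ σ w h, step_eq, took]
  have : (⟨t, h⟩ : Fin n).val = t := rfl
  rw [this]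
  split_ifs with h1 h2 <;>
    simp only [Finset.mem_insert, reduceCtorEq, and_false, or_false, and_true] <;>
    aesop

lemma mem_fst_iff {t : ℕ} (ht : t ≤ n) (m : Fin n) :
    m ∈ (stateAt σ w t).1 ↔ ∃ j : Fin n, j.val < t ∧ took σ w j = some m := by
  induction t with
  | zero => simp [stateAt]
  | succ t ih =>
    rw [mem_fst_succ σ w (by omega), ih (by omega)]
    constructor
    · rintro (⟨j, hj, hjm⟩ | hm)
      · exact ⟨j, by omega, hjm⟩
      · exact ⟨⟨t, by omega⟩, by simp, hm⟩
    · rintro ⟨j, hj, hjm⟩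
      rcases Nat.lt_or_ge j.val t with h | h
      · exact Or.inl ⟨j, h, hjm⟩
      · have : j = ⟨t, by omega⟩ := Fin.ext (show j.val = t by omega)
        exact Or.inr (this ▸ hjm)

lemma mem_snd_iff {t : ℕ} (ht : t ≤ n) (j : Fin n) :
    j ∈ (stateAt σ w t).2 ↔ j.val < t ∧ took σ w j = none := by
  induction t with
  | zero => simp [stateAt]
  | succ t ih =>
    rw [mem_snd_succ σ w (by omega), ih (by omega)]
    constructor
    · rintro (⟨hj, hjn⟩ | ⟨rfl, hn⟩)
      · exact ⟨by omega, hjn⟩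
      · exact ⟨by simp, hn⟩
    · rintro ⟨hj, hjn⟩
      rcases Nat.lt_or_ge j.val t with h | h
      · exact Or.inl ⟨h, hjn⟩
      · have : j = ⟨t, by omega⟩ := Fin.ext (show j.val = t by omega)
        exact Or.inr ⟨this, this ▸ hjn⟩

lemma stateAt_fst_mono {s t : ℕ} (hst : s ≤ t) (ht : t ≤ n) :
    (stateAt σ w s).1 ⊆ (stateAt σ w t).1 := by
  intro m hm
  rw [mem_fst_iff σ w (le_trans hst ht)] at hm
  rw [mem_fst_iff σ w ht]
  obtain ⟨j, hj, hjm⟩ := hm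
  exact ⟨j, by omega, hjm⟩

lemma mem_fst_of_took {j : Fin n} {m : Fin n} (h : took σ w j = some m) :
    m ∈ (stateAt σ w (j.val + 1)).1 :=
  (mem_fst_succ σ w j.isLt m).mpr (Or.inr h)

lemma not_mem_fst_of_took {j : Fin n} {m : Fin n} (h : took σ w j = some m) :
    m ∉ (stateAt σ w j.val).1 := by
  unfold took at h
  by_cases h1 : prefN σ w j ∈ (stateAt σ w j.val).1
  · by_cases h2 : othN σ w j ∈ (stateAt σ w j.val).1
    · simp [h1, h2] at h
    · simp only [h1, not_true_eq_false, if_false, h2, not_false_eq_true, if_true,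
        Option.some.injEq] at h
      subst h; exact h2
  · simp only [h1, not_false_eq_true, if_true, Option.some.injEq] at h
    subst h; exact h1

lemma took_mem_adj {j m : Fin n} (h : took σ w j = some m) :
    m = seatOf w j ∨ m = leftNapkin (seatOf w j) := by
  unfold took at h
  have hpo : (prefN σ w j = seatOf w j ∨ prefN σ w j = leftNapkin (seatOf w j)) ∧
      (othN σ w j = seatOf w j ∨ othN σ w j = leftNapkin (seatOf w j)) := by
    unfold prefN othN
    split_ifs <;> tauto
  by_cases h1 : prefN σ w j ∈ (stateAt σ w j.val).1
  · by_cases h2 : othN σ w j ∈ (stateAt σ w j.val).1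
    · simp [h1, h2] at h
    · simp only [h1, not_true_eq_false, if_false, h2, not_false_eq_true, if_true,
        Option.some.injEq] at h
      subst h; exact hpo.2
  · simp only [h1, not_false_eq_true, if_true, Option.some.injEq] at h
    subst h; exact hpo.1

lemma took_unique {j j' m : Fin n} (h : took σ w j = some m)
    (h' : took σ w j' = some m) : j = j' := by
  by_contra hne
  rcases Nat.lt_or_ge j.val j'.val with hlt | hge
  · exact not_mem_fst_of_took σ w h'
      (stateAt_fst_mono σ w (by omega) (le_of_lt j'.isLt) (mem_fst_of_took σ w h))
  · have hlt : j'.val < j.val := by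
      rcases Nat.lt_or_ge j'.val j.val with h2 | h2
      · exact h2
      · exact absurd (Fin.ext (by omega)) hne
    exact not_mem_fst_of_took σ w h
      (stateAt_fst_mono σ w (by omega) (le_of_lt j.isLt) (mem_fst_of_took σ w h'))

lemma took_none_iff {j : Fin n} :
    took σ w j = none ↔ prefN σ w j ∈ (stateAt σ w j.val).1 ∧
      othN σ w j ∈ (stateAt σ w j.val).1 := by
  unfold took
  split_ifs with h1 h2 <;> simp_all

/-- If a diner takes their non-preferred napkin, the preferred one was already taken. -/
lemma pref_taken_of_took_oth {j m : Fin n} (h : took σ w j = some m)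
    (hm : m ≠ prefN σ w j) : prefN σ w j ∈ (stateAt σ w j.val).1 := by
  unfold took at h
  by_cases h1 : prefN σ w j ∈ (stateAt σ w j.val).1
  · exact h1
  · simp only [h1, not_false_eq_true, if_true, Option.some.injEq] at h
    exact absurd h.symm hm

lemma mem_napkinless_iff {j : Fin n} :
    j ∈ napkinless σ w ↔ took σ w j = none := by
  unfold napkinless
  rw [dine_eq_stateAt, mem_snd_iff σ w le_rfl]
  simp [j.isLt]

/-- Every element of the claimed-napkin set has a unique taker; existence form. -/
lemma exists_taker {t : ℕ} (ht : t ≤ n) {m : Fin n}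
    (hm : m ∈ (stateAt σ w t).1) :
    ∃ j : Fin n, j.val < t ∧ took σ w j = some m :=
  (mem_fst_iff σ w ht m).mp hm

/-- Any partial injection on `Fin n` extends to a permutation. -/
lemma exists_perm_extend {D : Finset (Fin n)} (f : Fin n → Fin n)
    (hinj : Set.InjOn f D) : ∃ u : Equiv.Perm (Fin n), ∀ x ∈ D, u x = f x := by
  classical
  set E : Finset (Fin n) := D.image f with hE
  have hcard : Dᶜ.card = Eᶜ.card := by
    rw [Finset.card_compl, Finset.card_compl, Finset.card_image_of_injOn hinj]
  obtain ⟨ψ⟩ : Nonempty ((Dᶜ : Finset (Fin n)) ≃ (Eᶜ : Finset (Fin n))) :=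
    ⟨Finset.equivOfCardEq hcard⟩
  set F : Fin n → Fin n := fun x =>
    if h : x ∈ D then f x else (ψ ⟨x, by simpa using h⟩ : Fin n) with hF
  have hFinj : Function.Injective F := by
    intro x y hxy
    by_cases hx : x ∈ D <;> by_cases hy : y ∈ D <;>
      simp only [hF, hx, hy, dif_pos, dif_neg, not_false_eq_true] at hxy
    · exact hinj hx hy hxy
    · exfalso
      have h1 : f x ∈ E := Finset.mem_image_of_mem f hx
      have h2 : (ψ ⟨y, by simpa using hy⟩ : Fin n) ∈ Eᶜ := (ψ _).2
      rw [← hxy] at h2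
      exact (Finset.mem_compl.mp h2) h1
    · exfalso
      have h1 : f y ∈ E := Finset.mem_image_of_mem f hy
      have h2 : (ψ ⟨x, by simpa using hx⟩ : Fin n) ∈ Eᶜ := (ψ _).2
      rw [hxy] at h2
      exact (Finset.mem_compl.mp h2) h1
    · have h2 := ψ.injective (Subtype.ext hxy)
      simpa using congrArg Subtype.val h2
  refine ⟨Equiv.ofBijective F (Finite.injective_iff_bijective.mp hFinj), fun x hx => ?_⟩
  simp [hF, hx]

/-- The function sending `(i, 0/1/2)` to the plus-diner / starved diner / minus-diner
of the `i`-th balanced bench. -/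
def troika {k : ℕ} (P C M : Fin k → Fin n) (z : Fin k × Fin 3) : Fin n :=
  if z.2.val = 0 then P z.1 else if z.2.val = 1 then C z.1 else M z.1

lemma troika0 {k : ℕ} (P C M : Fin k → Fin n) (i : Fin k) :
    troika P C M (i, 0) = P i := rfl
lemma troika1 {k : ℕ} (P C M : Fin k → Fin n) (i : Fin k) :
    troika P C M (i, 1) = C i := rfl
lemma troika2 {k : ℕ} (P C M : Fin k → Fin n) (i : Fin k) :
    troika P C M (i, 2) = M i := rfl

lemma construct_seating (hn : 0 < n) (σ : Fin n → Bool) {k : ℕ} (hk : 3 * k ≤ n)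
    (P M C : Fin k → Fin n)
    (hσP : ∀ i, σ (P i) = true) (hσM : ∀ i, σ (M i) = false)
    (hPC : ∀ i, (P i : ℕ) < (C i : ℕ)) (hMC : ∀ i, (M i : ℕ) < (C i : ℕ))
    (hinj : Function.Injective (troika P C M)) :
    ∃ w : Equiv.Perm (Fin n), IsSeating w ∧ k ≤ nu σ w := by
  classical
  haveI : NeZero n := ⟨hn.ne'⟩
  set dnr := troika P C M with hdnr
  -- the offset `t` and its key properties
  obtain ⟨t, hkey1, hkey2⟩ :
      ∃ t : ℕ, (∀ z : Fin k × Fin 3, dnr z = 0 → (t + (3 * z.1.val + z.2.val)) % n = 0) ∧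
        ((¬ ∃ z, dnr z = 0) → ∀ z : Fin k × Fin 3, (t + (3 * z.1.val + z.2.val)) % n ≠ 0) := by
    by_cases h : ∃ z, dnr z = 0
    · obtain ⟨z₀, hz₀⟩ := h
      refine ⟨3 * n - (3 * z₀.1.val + z₀.2.val), fun z hz => ?_, fun h' => absurd ⟨z₀, hz₀⟩ h'⟩
      have hzz : z = z₀ := hinj (hz.trans hz₀.symm)
      subst hzz
      have hlt : 3 * z.1.val + z.2.val < 3 * n := by
        have := z.1.isLt; have := z.2.isLt; omega
      have : 3 * n - (3 * z.1.val + z.2.val) + (3 * z.1.val + z.2.val) = 3 * n := by omega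
      rw [this]
      simp [Nat.mul_mod_right]
    · refine ⟨1, fun z hz => absurd ⟨z, hz⟩ h, fun _ z hz => ?_⟩
      have h1 : 3 * z.1.val + z.2.val < 3 * k := by
        have := z.1.isLt; have := z.2.isLt; omega
      have h2 : 1 + (3 * z.1.val + z.2.val) ≤ n := by omega
      have h3 : 1 + (3 * z.1.val + z.2.val) = n := by
        rcases Nat.lt_or_ge (1 + (3 * z.1.val + z.2.val)) n with hl | hg
        · rw [Nat.mod_eq_of_lt hl] at hz; omega
        · omega
      -- then 3 * k = n and dnr is surjective, contradicting `h`
      have hkn : 3 * k = n := by omega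
      have hbij : Function.Bijective dnr := by
        rw [Fintype.bijective_iff_injective_and_card]
        refine ⟨hinj, ?_⟩
        simp only [Fintype.card_prod, Fintype.card_fin]
        omega
      obtain ⟨z', hz'⟩ := hbij.2 0
      exact h ⟨z', hz'⟩
  -- seat positions
  set pos : Fin k × Fin 3 → Fin n :=
    (fun z => ⟨(t + (3 * z.1.val + z.2.val)) % n, Nat.mod_lt _ hn⟩) with hpos
  have hposv : ∀ z, (pos z : ℕ) = (t + (3 * z.1.val + z.2.val)) % n := fun z => rfl
  have hposinj : Function.Injective pos := by
    intro z z' hzz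
    have hv : (t + (3 * z.1.val + z.2.val)) % n = (t + (3 * z'.1.val + z'.2.val)) % n := by
      simpa [hpos] using congrArg Fin.val hzz
    have h1 : 3 * z.1.val + z.2.val < n := by
      have := z.1.isLt; have := z.2.isLt; omega
    have h1' : 3 * z'.1.val + z'.2.val < n := by
      have := z'.1.isLt; have := z'.2.isLt; omega
    have hmod : (3 * z.1.val + z.2.val) % n = (3 * z'.1.val + z'.2.val) % n :=
      Nat.ModEq.add_left_cancel' t hv
    rw [Nat.mod_eq_of_lt h1, Nat.mod_eq_of_lt h1'] at hmod
    have hz1 : z.1.val = z'.1.val ∧ z.2.val = z'.2.val := by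
      have := z.2.isLt; have := z'.2.isLt; omega
    exact Prod.ext (Fin.ext hz1.1) (Fin.ext hz1.2)
  have hpos01 : ∀ i : Fin k, pos (i, 1) = pos (i, 0) + 1 := by
    intro i
    apply Fin.ext
    rw [Fin.add_def, hposv, hposv, Fin.val_one']
    show (t + (3 * i.val + 1)) % n = ((t + (3 * i.val + 0)) % n + 1 % n) % n
    have : t + (3 * i.val + 1) = t + (3 * i.val + 0) + 1 := by omega
    rw [this, Nat.add_mod (t + (3 * i.val + 0)) 1 n]
  have hpos12 : ∀ i : Fin k, pos (i, 2) = pos (i, 1) + 1 := by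
    intro i
    apply Fin.ext
    rw [Fin.add_def, hposv, hposv, Fin.val_one']
    show (t + (3 * i.val + 2)) % n = ((t + (3 * i.val + 1)) % n + 1 % n) % n
    have : t + (3 * i.val + 2) = t + (3 * i.val + 1) + 1 := by omega
    rw [this, Nat.add_mod (t + (3 * i.val + 1)) 1 n]
  have hleft1 : ∀ i : Fin k, leftNapkin (pos (i, 1)) = pos (i, 0) := by
    intro i; rw [hpos01]; exact leftNapkin_add_one _
  have hleft2 : ∀ i : Fin k, leftNapkin (pos (i, 2)) = pos (i, 1) := by
    intro i; rw [hpos12]; exact leftNapkin_add_one _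
  -- the (partial) seat-assignment function
  set f : Fin n → Fin n :=
    (fun x => if h : ∃ z, dnr z = x then pos h.choose else 0) with hf
  have hfd : ∀ z, f (dnr z) = pos z := by
    intro z
    have hex : ∃ z', dnr z' = dnr z := ⟨z, rfl⟩
    have : hex.choose = z := hinj hex.choose_spec
    simp only [hf, dif_pos hex, this]
  have hf0 : f 0 = 0 := by
    by_cases h : ∃ z, dnr z = 0
    · obtain ⟨z, hz⟩ := h
      rw [← hz, hfd]
      exact Fin.ext (by rw [hposv, hkey1 z hz, hz]; simp)
    · simp only [hf, dif_neg h]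
  set D : Finset (Fin n) := insert 0 (Finset.image dnr Finset.univ) with hD
  have hinjOn : Set.InjOn f D := by
    intro x hx y hy hxy
    simp only [hD, Finset.coe_insert, Set.mem_insert_iff, Finset.coe_image,
      Set.mem_image, Finset.mem_coe, Finset.mem_image] at hx hy
    have himg : ∀ {a : Fin n}, (∃ z, dnr z = a) → f a ≠ 0 ∨ a = 0 := by
      intro a ha
      by_cases ha0 : a = 0
      · exact Or.inr ha0
      · left
        obtain ⟨z, hz⟩ := ha
        rw [← hz, hfd]
        intro hcon
        have := congrArg Fin.val hcon
        rw [hposv] at this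
        by_cases hex0 : ∃ z', dnr z' = 0
        · obtain ⟨z', hz'⟩ := hex0
          have : pos z = pos z' := Fin.ext (by rw [hposv, hposv, this, hkey1 z' hz']; simp)
          exact ha0 (hz ▸ (hposinj this ▸ hz'))
        · exact hkey2 hex0 z this
    rcases hx with rfl | ⟨zx, _, rfl⟩ <;> rcases hy with rfl | ⟨zy, _, rfl⟩
    · rfl
    · rcases himg ⟨zy, rfl⟩ with hne | h0
      · exact absurd (hf0 ▸ hxy.symm) hne
      · exact h0.symm
    · rcases himg ⟨zx, rfl⟩ with hne | h0
      · exact absurd (hf0 ▸ hxy) hne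
      · exact h0
    · rw [hfd, hfd] at hxy
      exact congrArg dnr (hposinj hxy)
  obtain ⟨u, hu⟩ := exists_perm_extend f hinjOn
  have hud : ∀ z, u (dnr z) = pos z := by
    intro z
    rw [hu _ (by simp [hD]), hfd]
  have hu0 : u 0 = 0 := by
    rw [hu _ (by simp [hD]), hf0]
  refine ⟨u.symm, ?_, ?_⟩
  · intro i hi
    have : i = 0 := Fin.ext (by simpa using hi)
    subst this
    have : u.symm 0 = 0 := by
      apply u.injective
      rw [Equiv.apply_symm_apply, hu0]
    rw [this]
    rfl
  · -- now the dining dynamics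
    set w := u.symm with hw
    have hseat : ∀ z, seatOf w (dnr z) = pos z := by
      intro z
      show w.symm (dnr z) = pos z
      rw [hw, Equiv.symm_symm, hud]
    have hseat_inv : ∀ (j : Fin n) (z : Fin k × Fin 3), seatOf w j = pos z → j = dnr z := by
      intro j z hj
      have : u j = u (dnr z) := by
        rw [hud]
        rw [show seatOf w j = u j from by rw [hw]; rfl] at hj  -- seatOf w j = w.symm j = u j
        exact hj
      exact u.injective this
    have hA : ∀ i : Fin k, took σ w (P i) = some (pos (i, 0)) := by
      intro i
      have hfree : pos (i, 0) ∉ (stateAt σ w (P i).val).1 := by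
        intro hmem
        obtain ⟨j', hj', htk⟩ := exists_taker σ w (le_of_lt (P i).isLt) hmem
        rcases took_mem_adj σ w htk with h | h
        · have hj : j' = dnr (i, 0) := hseat_inv j' (i, 0) h.symm
          have : j' = P i := hj
          rw [this] at hj'
          exact lt_irrefl _ hj'
        · have h2 : seatOf w j' = pos (i, 0) + 1 := eq_add_one_of_leftNapkin_eq h.symm
          rw [← hpos01 i] at h2
          have hj : j' = dnr (i, 1) := hseat_inv j' (i, 1) h2
          have : j' = C i := hj
          rw [this] at hj'
          exact absurd hj' (by have := hPC i; omega)
      have hpref : prefN σ w (P i) = pos (i, 0) := by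
        unfold prefN
        rw [hσP i]
        simp only [if_true]
        exact hseat (i, 0)
      unfold took
      rw [hpref, if_pos hfree]
    have hB : ∀ i : Fin k, took σ w (M i) = some (pos (i, 1)) := by
      intro i
      have hfree : pos (i, 1) ∉ (stateAt σ w (M i).val).1 := by
        intro hmem
        obtain ⟨j', hj', htk⟩ := exists_taker σ w (le_of_lt (M i).isLt) hmem
        rcases took_mem_adj σ w htk with h | h
        · have hj : j' = dnr (i, 1) := hseat_inv j' (i, 1) h.symm
          have : j' = C i := hj
          rw [this] at hj'
          exact absurd hj' (by have := hMC i; omega)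
        · have h2 : seatOf w j' = pos (i, 1) + 1 := eq_add_one_of_leftNapkin_eq h.symm
          rw [← hpos12 i] at h2
          have hj : j' = dnr (i, 2) := hseat_inv j' (i, 2) h2
          have : j' = M i := hj
          rw [this] at hj'
          exact lt_irrefl _ hj'
      have hpref : prefN σ w (M i) = pos (i, 1) := by
        unfold prefN
        rw [hσM i]
        simp only [Bool.false_eq_true, if_false]
        have : seatOf w (M i) = pos (i, 2) := hseat (i, 2)
        rw [this, hleft2 i]
      unfold took
      rw [hpref, if_pos hfree]
    have hC : ∀ i : Fin k, took σ w (C i) = none := by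
      intro i
      have h0mem : pos (i, 0) ∈ (stateAt σ w (C i).val).1 := by
        refine stateAt_fst_mono σ w ?_ (le_of_lt (C i).isLt) (mem_fst_of_took σ w (hA i))
        have := hPC i; omega
      have h1mem : pos (i, 1) ∈ (stateAt σ w (C i).val).1 := by
        refine stateAt_fst_mono σ w ?_ (le_of_lt (C i).isLt) (mem_fst_of_took σ w (hB i))
        have := hMC i; omega
      have hseatC : seatOf w (C i) = pos (i, 1) := hseat (i, 1)
      rw [took_none_iff]
      unfold prefN othN
      rw [hseatC, hleft1 i]
      constructor <;> split_ifs <;> assumption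
    have hCmem : ∀ i, C i ∈ napkinless σ w := fun i => (mem_napkinless_iff σ w).mpr (hC i)
    have hCinj : Set.InjOn C (Finset.univ : Finset (Fin k)) := by
      intro a _ b _ hab
      have h2 : dnr (a, 1) = dnr (b, 1) := hab
      exact (Prod.ext_iff.mp (hinj h2)).1
    calc k = (Finset.univ : Finset (Fin k)).card := by simp
    _ ≤ (napkinless σ w).card :=
        Finset.card_le_card_of_injOn C (fun i _ => hCmem i) hCinj
    _ = nu σ w := rfl




lemma balanced_ne {q : ℕ} (σ : Fin n → Bool) (β : BenchCollection n q) {i : Fin q}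
    (h : Balanced σ β i) : σ (β.a i) ≠ σ (β.b i) := by
  unfold Balanced sign at h
  cases ha : σ (β.a i) <;> cases hb : σ (β.b i) <;> rw [ha, hb] at h <;> simp_all

lemma balance_le_nuMax (hn : 0 < n) (σ : Fin n → Bool) (β : BenchCollection n (n / 3)) :
    balance σ β ≤ nuMax σ := by
  classical
  set K := Finset.univ.filter (fun i => Balanced σ β i) with hK
  set k := K.card with hk
  have hbalk : balance σ β = k := rfl
  set e := K.orderIsoOfFin rfl with he
  set I : Fin k → Fin (n / 3) := fun i => ((e i) : Fin (n / 3)) with hI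
  have hIinj : Function.Injective I := by
    intro a b hab
    exact (OrderIso.injective e) (Subtype.ext hab)
  have hbal : ∀ i, Balanced σ β (I i) := by
    intro i
    have h2 := (e i).2
    exact (Finset.mem_filter.mp h2).2
  have hopp : ∀ i, σ (β.a (I i)) ≠ σ (β.b (I i)) := fun i => balanced_ne σ β (hbal i)
  set P : Fin k → Fin n := fun i => if σ (β.a (I i)) then β.a (I i) else β.b (I i) with hP
  set M : Fin k → Fin n := fun i => if σ (β.a (I i)) then β.b (I i) else β.a (I i) with hM
  set C : Fin k → Fin n := fun i => β.c (I i) with hC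
  have hCi : ∀ i, C i = β.c (I i) := fun _ => rfl
  have hPab : ∀ i, (P i = β.a (I i) ∧ M i = β.b (I i)) ∨
      (P i = β.b (I i) ∧ M i = β.a (I i)) := by
    intro i
    by_cases hx : σ (β.a (I i)) = true
    · refine Or.inl ⟨?_, ?_⟩
      · rw [hP]; beta_reduce; rw [if_pos hx]
      · rw [hM]; beta_reduce; rw [if_pos hx]
    · refine Or.inr ⟨?_, ?_⟩
      · rw [hP]; beta_reduce; rw [if_neg hx]
      · rw [hM]; beta_reduce; rw [if_neg hx]
  have hσP : ∀ i, σ (P i) = true := by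
    intro i
    by_cases hx : σ (β.a (I i)) = true
    · have : P i = β.a (I i) := by rw [hP]; beta_reduce; rw [if_pos hx]
      rw [this]; exact hx
    · have : P i = β.b (I i) := by rw [hP]; beta_reduce; rw [if_neg hx]
      rw [this]
      rcases Bool.eq_false_or_eq_true (σ (β.b (I i))) with hy | hy
      · exact hy
      · rw [Bool.not_eq_true] at hx
        exact absurd (hx.trans hy.symm) (hopp i)
  have hσM : ∀ i, σ (M i) = false := by
    intro i
    by_cases hx : σ (β.a (I i)) = true
    · have : M i = β.b (I i) := by rw [hM]; beta_reduce; rw [if_pos hx]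
      rw [this]
      rcases Bool.eq_false_or_eq_true (σ (β.b (I i))) with hy | hy
      · exact absurd (hx.trans hy.symm) (hopp i)
      · exact hy
    · have : M i = β.a (I i) := by rw [hM]; beta_reduce; rw [if_neg hx]
      rw [this]
      exact Bool.not_eq_true _ ▸ hx
  have hab : ∀ i, (β.a (I i) : ℕ) < (β.b (I i) : ℕ) := fun i => β.hab (I i)
  have hbc : ∀ i, (β.b (I i) : ℕ) < (β.c (I i) : ℕ) := fun i => β.hbc (I i)
  have hPC : ∀ i, (P i : ℕ) < (C i : ℕ) := by
    intro i
    rcases hPab i with ⟨h1, _⟩ | ⟨h1, _⟩ <;> rw [h1, hCi]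
    · exact lt_trans (hab i) (hbc i)
    · exact hbc i
  have hMC : ∀ i, (M i : ℕ) < (C i : ℕ) := by
    intro i
    rcases hPab i with ⟨_, h1⟩ | ⟨_, h1⟩ <;> rw [h1, hCi]
    · exact hbc i
    · exact lt_trans (hab i) (hbc i)
  have hPM : ∀ i, P i ≠ M i := by
    intro i h
    have h2 := congrArg σ h
    rw [hσP i, hσM i] at h2
    exact Bool.noConfusion h2
  have htri_mem : ∀ z : Fin k × Fin 3,
      troika P C M z ∈ ({β.a (I z.1), β.b (I z.1), β.c (I z.1)} : Finset (Fin n)) := by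
    rintro ⟨i, dv, hdv⟩
    interval_cases dv <;> simp only [troika, reduceIte]
    all_goals rcases hPab i with ⟨h1, h2⟩ | ⟨h1, h2⟩ <;> simp [h1, h2, hCi]
  have hinj : Function.Injective (troika P C M) := by
    rintro ⟨i, dv, hdv⟩ ⟨i', dv', hdv'⟩ h
    by_cases hii : i = i'
    · subst hii
      interval_cases dv <;> interval_cases dv'
      all_goals first
        | rfl
        | (exact absurd (show P i = M i from h) (hPM i))
        | (exact absurd (show M i = P i from h).symm (hPM i))
        | (have h1 := hPC i; have h2 := hMC i
           first
             | (have hv : ((P i : Fin n) : ℕ) = ((C i : Fin n) : ℕ) := congrArg Fin.val h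
                omega)
             | (have hv : ((C i : Fin n) : ℕ) = ((P i : Fin n) : ℕ) := congrArg Fin.val h
                omega)
             | (have hv : ((M i : Fin n) : ℕ) = ((C i : Fin n) : ℕ) := congrArg Fin.val h
                omega)
             | (have hv : ((C i : Fin n) : ℕ) = ((M i : Fin n) : ℕ) := congrArg Fin.val h
                omega))
    · exfalso
      have hd := β.disj (I i) (I i') (fun hc => hii (hIinj hc))
      have h1 := htri_mem (⟨i, dv, hdv⟩ : Fin k × Fin 3)
      have h2 := htri_mem (⟨i', dv', hdv'⟩ : Fin k × Fin 3)
      rw [h] at h1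
      exact Finset.disjoint_left.mp hd h1 h2
  have h3k : 3 * k ≤ n := by
    have h1 : k ≤ n / 3 := by
      rw [hk]
      calc K.card ≤ (Finset.univ : Finset (Fin (n / 3))).card := Finset.card_le_card (Finset.filter_subset _ _)
      _ = n / 3 := by simp
    calc 3 * k ≤ 3 * (n / 3) := by omega
    _ ≤ n := by omega
  obtain ⟨w, hws, hkn⟩ := construct_seating hn σ h3k P M C hσP hσM hPC hMC hinj
  calc balance σ β = k := hbalk
  _ ≤ nu σ w := hkn
  _ ≤ nuMax σ := Finset.le_sup (Finset.mem_filter.mpr ⟨Finset.mem_univ _, hws⟩)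

lemma leftNapkin_add_one' [NeZero n] (s : Fin n) : leftNapkin s + 1 = s :=
  leftNapkin_inj (leftNapkin_add_one (leftNapkin s))

lemma leftNapkin_ne (hn2 : 2 ≤ n) (s : Fin n) : leftNapkin s ≠ s := by
  intro h
  have hv : ((s : ℕ) + (n - 1)) % n = (s : ℕ) := congrArg Fin.val h
  rcases Nat.lt_or_ge ((s : ℕ) + (n - 1)) n with hl | hg
  · rw [Nat.mod_eq_of_lt hl] at hv
    omega
  · rw [Nat.mod_eq_sub_mod hg, Nat.mod_eq_of_lt (by have := s.isLt; omega)] at hv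
    have := s.isLt
    omega

/-- Walk right along a maximal run of right-takers, to find the napkinless diner
whom this run is blocking (if any). -/
def ownerR [NeZero n] (σ : Fin n → Bool) (w : Equiv.Perm (Fin n)) (x : Fin n) :
    Option (Fin n) :=
  let y := w (seatOf w x + 1)
  if took σ w y = none then some y
  else if h : took σ w y = some (seatOf w y) ∧ σ y = false ∧ x < y then
    ownerR σ w y
  else none
termination_by n - x.val
decreasing_by
  have := h.2.2
  rw [Fin.lt_def] at this
  omega

/-- Walk left along a maximal run of left-takers, to find the napkinless diner
whom this run is blocking (if any). -/
def ownerL [NeZero n] (σ : Fin n → Bool) (w : Equiv.Perm (Fin n)) (x : Fin n) :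
    Option (Fin n) :=
  let y := w (leftNapkin (seatOf w x))
  if took σ w y = none then some y
  else if h : took σ w y = some (leftNapkin (seatOf w y)) ∧ σ y = true ∧ x < y then
    ownerL σ w y
  else none
termination_by n - x.val
decreasing_by
  have := h.2.2
  rw [Fin.lt_def] at this
  omega

lemma ownerR_none [NeZero n] (σ : Fin n → Bool) (w : Equiv.Perm (Fin n)) (x : Fin n)
    (h : took σ w (w (seatOf w x + 1)) = none) :
    ownerR σ w x = some (w (seatOf w x + 1)) := by
  rw [ownerR]
  simp only [h, if_true]

lemma ownerR_step [NeZero n] (σ : Fin n → Bool) (w : Equiv.Perm (Fin n)) (x : Fin n)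
    (h1 : took σ w (w (seatOf w x + 1)) = some (seatOf w (w (seatOf w x + 1))))
    (h2 : σ (w (seatOf w x + 1)) = false) (h3 : x < w (seatOf w x + 1)) :
    ownerR σ w x = ownerR σ w (w (seatOf w x + 1)) := by
  rw [ownerR]
  simp only [h1, reduceCtorEq, if_false, h2, h3, and_true, and_self, dif_pos]

lemma ownerL_none [NeZero n] (σ : Fin n → Bool) (w : Equiv.Perm (Fin n)) (x : Fin n)
    (h : took σ w (w (leftNapkin (seatOf w x))) = none) :
    ownerL σ w x = some (w (leftNapkin (seatOf w x))) := by
  rw [ownerL]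
  simp only [h, if_true]

lemma ownerL_step [NeZero n] (σ : Fin n → Bool) (w : Equiv.Perm (Fin n)) (x : Fin n)
    (h1 : took σ w (w (leftNapkin (seatOf w x))) =
      some (leftNapkin (seatOf w (w (leftNapkin (seatOf w x))))))
    (h2 : σ (w (leftNapkin (seatOf w x))) = true)
    (h3 : x < w (leftNapkin (seatOf w x))) :
    ownerL σ w x = ownerL σ w (w (leftNapkin (seatOf w x))) := by
  rw [ownerL]
  simp only [h1, reduceCtorEq, if_false, h2, h3, and_true, and_self, dif_pos]

lemma leftChain_aux [NeZero n] (σ : Fin n → Bool) (w : Equiv.Perm (Fin n))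
    (hn2 : 2 ≤ n) (N : ℕ) :
    ∀ u : Fin n, u.val < N → took σ w u = some (seatOf w u) → σ u = false →
    ∃ p z : Fin n, p < z ∧ z ≤ u ∧ σ p = true ∧ σ z = false ∧
      took σ w p = some (seatOf w p) ∧ took σ w z = some (seatOf w z) ∧
      ownerR σ w p = ownerR σ w u ∧ ownerR σ w z = ownerR σ w u := by
  induction N with
  | zero => exact fun u h _ _ => absurd h (Nat.not_lt_zero _)
  | succ N IH =>
    intro u hu htook hσ
    have hne : seatOf w u ≠ prefN σ w u := by
      unfold prefN
      rw [hσ]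
      simp only [Bool.false_eq_true, if_false]
      exact fun hcon => leftNapkin_ne hn2 _ hcon.symm
    have hpref : prefN σ w u ∈ (stateAt σ w u.val).1 :=
      pref_taken_of_took_oth σ w htook hne
    have hprefeq : prefN σ w u = leftNapkin (seatOf w u) := by
      unfold prefN
      rw [hσ]
      simp only [Bool.false_eq_true, if_false]
    rw [hprefeq] at hpref
    obtain ⟨u₁, hu₁, htk₁⟩ := exists_taker σ w (le_of_lt u.isLt) hpref
    have hseat₁ : seatOf w u₁ = leftNapkin (seatOf w u) := by
      rcases took_mem_adj σ w htk₁ with h | h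
      · exact h.symm
      · exfalso
        have h2 : seatOf w u₁ = seatOf w u := leftNapkin_inj h.symm
        have h3 : u₁ = u := w.symm.injective h2
        rw [h3] at hu₁
        exact lt_irrefl _ hu₁
    have hRtaker₁ : took σ w u₁ = some (seatOf w u₁) := by rw [hseat₁]; exact htk₁
    have hw : w (seatOf w u₁ + 1) = u := by
      rw [hseat₁, leftNapkin_add_one']
      exact w.apply_symm_apply u
    have howner : ownerR σ w u₁ = ownerR σ w u := by
      have hstep := ownerR_step σ w u₁ (by rw [hw]; exact htook) (by rw [hw]; exact hσ)
        (by rw [hw]; exact Fin.lt_def.mpr hu₁)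
      rw [hw] at hstep
      exact hstep
    rcases Bool.eq_false_or_eq_true (σ u₁) with hσ₁ | hσ₁
    · exact ⟨u₁, u, Fin.lt_def.mpr hu₁, le_refl u, hσ₁, hσ, hRtaker₁, htook, howner, rfl⟩
    · obtain ⟨p, z, hpz, hzu, hσp, hσz, hRp, hRz, hop, hoz⟩ :=
        IH u₁ (by omega) hRtaker₁ hσ₁
      exact ⟨p, z, hpz, le_trans hzu (le_of_lt (Fin.lt_def.mpr hu₁)), hσp, hσz, hRp, hRz,
        hop.trans howner, hoz.trans howner⟩

lemma rightChain_aux [NeZero n] (σ : Fin n → Bool) (w : Equiv.Perm (Fin n))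
    (hn2 : 2 ≤ n) (N : ℕ) :
    ∀ v : Fin n, v.val < N → took σ w v = some (leftNapkin (seatOf w v)) → σ v = true →
    ∃ p z : Fin n, p < z ∧ z ≤ v ∧ σ p = false ∧ σ z = true ∧
      took σ w p = some (leftNapkin (seatOf w p)) ∧
      took σ w z = some (leftNapkin (seatOf w z)) ∧
      ownerL σ w p = ownerL σ w v ∧ ownerL σ w z = ownerL σ w v := by
  induction N with
  | zero => exact fun v h _ _ => absurd h (Nat.not_lt_zero _)
  | succ N IH =>
    intro v hv htook hσ
    have hne : leftNapkin (seatOf w v) ≠ prefN σ w v := by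
      unfold prefN
      rw [hσ]
      simp only [if_true]
      exact leftNapkin_ne hn2 _
    have hpref : prefN σ w v ∈ (stateAt σ w v.val).1 :=
      pref_taken_of_took_oth σ w htook hne
    have hprefeq : prefN σ w v = seatOf w v := by
      unfold prefN
      rw [hσ]
      simp only [if_true]
    rw [hprefeq] at hpref
    obtain ⟨v₁, hv₁, htk₁⟩ := exists_taker σ w (le_of_lt v.isLt) hpref
    have hseat₁ : seatOf w v = leftNapkin (seatOf w v₁) := by
      rcases took_mem_adj σ w htk₁ with h | h
      · exfalso
        have h3 : v₁ = v := w.symm.injective h.symm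
        rw [h3] at hv₁
        exact lt_irrefl _ hv₁
      · exact h
    have hLtaker₁ : took σ w v₁ = some (leftNapkin (seatOf w v₁)) := by
      rw [← hseat₁]; exact htk₁
    have hw : w (leftNapkin (seatOf w v₁)) = v := by
      rw [← hseat₁]
      exact w.apply_symm_apply v
    have howner : ownerL σ w v₁ = ownerL σ w v := by
      have hstep := ownerL_step σ w v₁ (by rw [hw]; exact htook) (by rw [hw]; exact hσ)
        (by rw [hw]; exact Fin.lt_def.mpr hv₁)
      rw [hw] at hstep
      exact hstep
    rcases Bool.eq_false_or_eq_true (σ v₁) with hσ₁ | hσ₁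
    · obtain ⟨p, z, hpz, hzv, hσp, hσz, hLp, hLz, hop, hoz⟩ :=
        IH v₁ (by omega) hLtaker₁ hσ₁
      exact ⟨p, z, hpz, le_trans hzv (le_of_lt (Fin.lt_def.mpr hv₁)), hσp, hσz, hLp, hLz,
        hop.trans howner, hoz.trans howner⟩
    · exact ⟨v₁, v, Fin.lt_def.mpr hv₁, le_refl v, hσ₁, hσ, hLtaker₁, htook, howner, rfl⟩

/-- The tag recording how a diner helps block the napkinless diner `j`: it is either a
right-taker whose maximal run of right-takers ends just left of `j`, or a left-taker
whose maximal run of left-takers ends just right of `j`. -/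
def Tagged [NeZero n] (σ : Fin n → Bool) (w : Equiv.Perm (Fin n)) (x j : Fin n) : Prop :=
  (took σ w x = some (seatOf w x) ∧ ownerR σ w x = some j) ∨
  (took σ w x = some (leftNapkin (seatOf w x)) ∧ ownerL σ w x = some j)

lemma tagged_unique [NeZero n] (σ : Fin n → Bool) (w : Equiv.Perm (Fin n)) (hn2 : 2 ≤ n)
    {x j j' : Fin n} (h : Tagged σ w x j) (h' : Tagged σ w x j') : j = j' := by
  rcases h with ⟨ht, ho⟩ | ⟨ht, ho⟩ <;> rcases h' with ⟨ht', ho'⟩ | ⟨ht', ho'⟩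
  · rw [ho] at ho'
    exact Option.some.inj ho'
  · exfalso
    rw [ht] at ht'
    exact leftNapkin_ne hn2 _ (Option.some.inj ht').symm
  · exfalso
    rw [ht] at ht'
    exact leftNapkin_ne hn2 _ (Option.some.inj ht')
  · rw [ho] at ho'
    exact Option.some.inj ho'

lemma pair_of_napkinless [NeZero n] (σ : Fin n → Bool) (w : Equiv.Perm (Fin n))
    {j : Fin n} (hj : took σ w j = none) :
    ∃ x y : Fin n, x < y ∧ y < j ∧ σ x ≠ σ y ∧
      Tagged σ w x j ∧ Tagged σ w y j := by
  set s := seatOf w j with hs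
  have hboth : s ∈ (stateAt σ w j.val).1 ∧ leftNapkin s ∈ (stateAt σ w j.val).1 := by
    have h2 := (took_none_iff σ w).mp hj
    unfold prefN othN at h2
    rcases Bool.eq_false_or_eq_true (σ j) with hσj | hσj <;> rw [hσj] at h2
    · simp only [if_true] at h2
      exact h2
    · simp only [Bool.false_eq_true, if_false] at h2
      exact ⟨h2.2, h2.1⟩
  -- the taker `v` of napkin `s` sits at seat `s+1` and is a left-taker
  obtain ⟨v, hvlt, hvtk⟩ := exists_taker σ w (le_of_lt j.isLt) hboth.1
  -- the taker `u` of napkin `s-1` sits at seat `s-1` and is a right-taker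
  obtain ⟨u, hult, hutk⟩ := exists_taker σ w (le_of_lt j.isLt) hboth.2
  have hn2 : 2 ≤ n := by
    rcases Nat.lt_or_ge n 2 with h | h
    · interval_cases n
      · exact absurd j.isLt (by omega)
      · omega
    · exact h
  have hvs : s = leftNapkin (seatOf w v) := by
    rcases took_mem_adj σ w hvtk with h | h
    · exfalso
      have h3 : v = j := w.symm.injective h.symm
      rw [h3] at hvlt
      exact lt_irrefl _ hvlt
    · exact h
  have hvL : took σ w v = some (leftNapkin (seatOf w v)) := by rw [← hvs]; exact hvtk
  have hus : seatOf w u = leftNapkin s := by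
    rcases took_mem_adj σ w hutk with h | h
    · exact h.symm
    · exfalso
      have h2 : seatOf w u = seatOf w j := leftNapkin_inj h.symm
      have h3 : u = j := w.symm.injective h2
      rw [h3] at hult
      exact lt_irrefl _ hult
  have huR : took σ w u = some (seatOf w u) := by rw [hus]; exact hutk
  have hownu : ownerR σ w u = some j := by
    have hw : w (seatOf w u + 1) = j := by
      rw [hus, leftNapkin_add_one']
      exact w.apply_symm_apply j
    have := ownerR_none σ w u (by rw [hw]; exact hj)
    rw [hw] at this
    exact this
  have hownv : ownerL σ w v = some j := by
    have hw : w (leftNapkin (seatOf w v)) = j := by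
      rw [← hvs]
      exact w.apply_symm_apply j
    have := ownerL_none σ w v (by rw [hw]; exact hj)
    rw [hw] at this
    exact this
  have hulj : u < j := Fin.lt_def.mpr hult
  have hvlj : v < j := Fin.lt_def.mpr hvlt
  rcases Bool.eq_false_or_eq_true (σ u) with hσu | hσu
  · rcases Bool.eq_false_or_eq_true (σ v) with hσv | hσv
    · -- σ u = true, σ v = true : right chain from v
      obtain ⟨p, z, hpz, hzv, hσp, hσz, hLp, hLz, hop, hoz⟩ :=
        rightChain_aux σ w hn2 n v v.isLt hvL hσv
      exact ⟨p, z, hpz, lt_of_le_of_lt hzv hvlj, by rw [hσp, hσz]; simp,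
        Or.inr ⟨hLp, hop.trans hownv⟩, Or.inr ⟨hLz, hoz.trans hownv⟩⟩
    · -- σ u = true, σ v = false : opposite pair
      have huv : u ≠ v := by
        intro h
        rw [h, hσv] at hσu
        exact Bool.noConfusion hσu
      rcases lt_or_gt_of_ne huv with hlt | hgt
      · exact ⟨u, v, hlt, hvlj, by rw [hσu, hσv]; simp,
          Or.inl ⟨huR, hownu⟩, Or.inr ⟨hvL, hownv⟩⟩
      · exact ⟨v, u, hgt, hulj, by rw [hσu, hσv]; simp,
          Or.inr ⟨hvL, hownv⟩, Or.inl ⟨huR, hownu⟩⟩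
  · -- σ u = false : left chain from u
    obtain ⟨p, z, hpz, hzu, hσp, hσz, hRp, hRz, hop, hoz⟩ :=
      leftChain_aux σ w hn2 n u u.isLt huR hσu
    exact ⟨p, z, hpz, lt_of_le_of_lt hzu hulj, by rw [hσp, hσz]; simp,
      Or.inl ⟨hRp, hop.trans hownu⟩, Or.inl ⟨hRz, hoz.trans hownu⟩⟩

lemma balanced_of_ne {q : ℕ} (σ : Fin n → Bool) (β : BenchCollection n q) {i : Fin q}
    (h : σ (β.a i) ≠ σ (β.b i)) : Balanced σ β i := by
  unfold Balanced sign
  cases ha : σ (β.a i) <;> cases hb : σ (β.b i) <;> simp_all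

lemma exists_bench_ge_nuMax (hn : 0 < n) (σ : Fin n → Bool) :
    ∃ β : BenchCollection n (n / 3), nuMax σ ≤ balance σ β := by
  classical
  haveI : NeZero n := ⟨hn.ne'⟩
  set q := n / 3 with hq
  have h3q : 3 * q ≤ n := by
    have := Nat.div_mul_le_self n 3
    omega
  have hmem : (1 : Equiv.Perm (Fin n)) ∈
      Finset.univ.filter (fun w : Equiv.Perm (Fin n) => IsSeating w) := by
    rw [Finset.mem_filter]
    exact ⟨Finset.mem_univ _, fun i hi => by simpa using hi⟩
  obtain ⟨w₀, hw₀mem, hw₀⟩ :=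
    Finset.exists_mem_eq_sup _ ⟨1, hmem⟩ (nu σ)
  set N := napkinless σ w₀ with hN
  have hν : nuMax σ = N.card := hw₀
  set ν := N.card with hνdef
  have htookN : ∀ j ∈ N, took σ w₀ j = none := fun j hj => (mem_napkinless_iff σ w₀).mp hj
  have hsel : ∀ j : Fin n, ∃ x y : Fin n, j ∈ N →
      x < y ∧ y < j ∧ σ x ≠ σ y ∧ Tagged σ w₀ x j ∧ Tagged σ w₀ y j := by
    intro j
    by_cases hj : j ∈ N
    · obtain ⟨x, y, h⟩ := pair_of_napkinless σ w₀ (htookN j hj)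
      exact ⟨x, y, fun _ => h⟩
    · exact ⟨0, 0, fun h => absurd h hj⟩
  choose X Y hXY using hsel
  set T : Fin n → Finset (Fin n) := fun j => {X j, Y j, j} with hT
  have hTmem : ∀ j, X j ∈ T j ∧ Y j ∈ T j ∧ j ∈ T j := by
    intro j
    refine ⟨?_, ?_, ?_⟩ <;> simp [hT]
  have hTcard : ∀ j ∈ N, (T j).card = 3 := by
    intro j hj
    obtain ⟨h1, h2, _, _, _⟩ := hXY j hj
    rw [hT]
    rw [Finset.card_insert_of_notMem (by
      simp only [Finset.mem_insert, Finset.mem_singleton]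
      push_neg
      exact ⟨ne_of_lt h1, ne_of_lt (lt_trans h1 h2)⟩)]
    rw [Finset.card_insert_of_notMem (by
      simp only [Finset.mem_singleton]
      exact ne_of_lt h2)]
    rfl
  have htagged : ∀ j ∈ N, ∀ d ∈ T j, d = j ∨ Tagged σ w₀ d j := by
    intro j hj d hd
    obtain ⟨_, _, _, h4, h5⟩ := hXY j hj
    rw [hT] at hd
    simp only [Finset.mem_insert, Finset.mem_singleton] at hd
    rcases hd with rfl | rfl | rfl
    · exact Or.inr h4
    · exact Or.inr h5
    · exact Or.inl rfl
  have hTdisj : ∀ j ∈ N, ∀ j' ∈ N, j ≠ j' → Disjoint (T j) (T j') := by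
    intro j hj j' hj' hne
    obtain ⟨hx1, hy1, _, _, _⟩ := hXY j hj
    have hn2 : 2 ≤ n := by
      have h1 := hx1
      have h2 := hy1
      rw [Fin.lt_def] at h1 h2
      have := j.isLt
      omega
    rw [Finset.disjoint_left]
    intro d hd hd'
    rcases htagged j hj d hd with rfl | htag
    · rcases htagged j' hj' d hd' with rfl | htag'
      · exact hne rfl
      · rcases htag' with ⟨ht, _⟩ | ⟨ht, _⟩ <;> rw [htookN d hj] at ht <;> exact absurd ht (by simp)
    · rcases htagged j' hj' d hd' with rfl | htag'
      · rcases htag with ⟨ht, _⟩ | ⟨ht, _⟩ <;> rw [htookN d hj'] at ht <;> exact absurd ht (by simp)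
      · exact hne (tagged_unique σ w₀ hn2 htag htag')
  have hUcard : (N.biUnion T).card = 3 * ν := by
    rw [Finset.card_biUnion (fun j hj j' hj' hne => hTdisj j hj j' hj' hne)]
    rw [Finset.sum_congr rfl hTcard]
    simp [Nat.mul_comm]
    rfl
  have h3ν : 3 * ν ≤ n := by
    have h2 := Finset.card_le_card (Finset.subset_univ (N.biUnion T))
    rw [hUcard] at h2
    simpa using h2
  have hνq : ν ≤ q := by
    rw [hq]
    rw [Nat.le_div_iff_mul_le (by norm_num)]
    omega
  set eN := N.orderIsoOfFin (rfl : N.card = ν) with heN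
  set R := Finset.univ \ (N.biUnion T) with hR
  have hRcard : 3 * (q - ν) ≤ R.card := by
    rw [hR, Finset.card_sdiff_of_subset (Finset.subset_univ _), hUcard]
    simp only [Finset.card_univ, Fintype.card_fin]
    omega
  set emb := R.orderEmbOfCardLe hRcard with hemb
  have hembR : ∀ x, emb x ∈ R := fun x => R.orderEmbOfCardLe_mem hRcard x
  -- the bench collection
  have hbound : ∀ (i : Fin q), ¬(i.val < ν) → ∀ d : ℕ, d < 3 →
      3 * (i.val - ν) + d < 3 * (q - ν) := by
    intro i h d hd
    have := i.isLt
    omega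
  set A : Fin q → Fin n := fun i =>
    if h : i.val < ν then X ((eN ⟨i.val, h⟩ : N) : Fin n)
    else emb ⟨3 * (i.val - ν), by simpa using hbound i h 0 (by norm_num)⟩ with hA
  set B : Fin q → Fin n := fun i =>
    if h : i.val < ν then Y ((eN ⟨i.val, h⟩ : N) : Fin n)
    else emb ⟨3 * (i.val - ν) + 1, hbound i h 1 (by norm_num)⟩ with hB
  set Cc : Fin q → Fin n := fun i =>
    if h : i.val < ν then ((eN ⟨i.val, h⟩ : N) : Fin n)
    else emb ⟨3 * (i.val - ν) + 2, hbound i h 2 (by norm_num)⟩ with hCc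
  have hNmem : ∀ {m : ℕ} (h : m < ν), ((eN ⟨m, h⟩ : N) : Fin n) ∈ N := fun h => (eN _).2
  have hsetEq : ∀ (i : Fin q) (h : i.val < ν),
      ({A i, B i, Cc i} : Finset (Fin n)) = T ((eN ⟨i.val, h⟩ : N) : Fin n) := by
    intro i h
    rw [hA, hB, hCc, hT]
    simp only [dif_pos h]
  have hab : ∀ i, A i < B i := by
    intro i
    rw [hA, hB]
    by_cases h : i.val < ν
    · simp only [dif_pos h]
      exact (hXY _ (hNmem h)).1
    · simp only [dif_neg h]
      exact emb.strictMono (Fin.mk_lt_mk.mpr (by omega))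
  have hbc : ∀ i, B i < Cc i := by
    intro i
    rw [hB, hCc]
    by_cases h : i.val < ν
    · simp only [dif_pos h]
      exact (hXY _ (hNmem h)).2.1
    · simp only [dif_neg h]
      exact emb.strictMono (Fin.mk_lt_mk.mpr (by omega))
  have hmemU : ∀ (i : Fin q) (h : i.val < ν) (d : Fin n),
      d ∈ ({A i, B i, Cc i} : Finset (Fin n)) → d ∈ N.biUnion T := by
    intro i h d hd
    rw [hsetEq i h] at hd
    exact Finset.mem_biUnion.mpr ⟨_, hNmem h, hd⟩
  have hmemR : ∀ (i : Fin q), ¬(i.val < ν) → ∀ d : Fin n,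
      d ∈ ({A i, B i, Cc i} : Finset (Fin n)) → d ∈ R := by
    intro i h d hd
    simp only [hA, hB, hCc, dif_neg h, Finset.mem_insert, Finset.mem_singleton] at hd
    rcases hd with rfl | rfl | rfl <;> exact hembR _
  have hdisj : ∀ i i' : Fin q, i ≠ i' →
      Disjoint ({A i, B i, Cc i} : Finset (Fin n)) ({A i', B i', Cc i'} : Finset (Fin n)) := by
    intro i i' hne
    by_cases h : i.val < ν <;> by_cases h' : i'.val < ν
    · rw [hsetEq i h, hsetEq i' h']
      refine hTdisj _ (hNmem h) _ (hNmem h') ?_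
      intro hc
      apply hne
      have h2 := eN.injective (Subtype.ext hc)
      have h3 := congrArg Fin.val h2
      exact Fin.ext h3
    · rw [Finset.disjoint_right]
      intro d hd hd'
      have h1 := hmemU i h d hd'
      have h2 := hmemR i' h' d hd
      rw [hR, Finset.mem_sdiff] at h2
      exact h2.2 h1
    · rw [Finset.disjoint_left]
      intro d hd hd'
      have h1 := hmemU i' h' d hd'
      have h2 := hmemR i h d hd
      rw [hR, Finset.mem_sdiff] at h2
      exact h2.2 h1
    · rw [Finset.disjoint_left]
      intro d hd hd'
      simp only [hA, hB, hCc, dif_neg h, dif_neg h', Finset.mem_insert,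
        Finset.mem_singleton] at hd hd'
      have hii : i.val ≠ i'.val := fun hc => hne (Fin.ext hc)
      rcases hd with rfl | rfl | rfl <;> rcases hd' with he | he | he <;>
        · have := emb.injective he
          have hv := congrArg Fin.val this
          simp only [] at hv
          have := i.isLt
          have := i'.isLt
          omega
  set β : BenchCollection n q := ⟨A, B, Cc, hab, hbc, hdisj⟩ with hβ
  refine ⟨β, ?_⟩
  have hbalanced : ∀ i : Fin q, i.val < ν → Balanced σ β i := by
    intro i h
    apply balanced_of_ne
    show σ (A i) ≠ σ (B i)
    rw [hA, hB]
    simp only [dif_pos h]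
    exact (hXY _ (hNmem h)).2.2.1
  rw [hν]
  unfold balance
  have hinj2 : Set.InjOn (fun m : Fin ν => (⟨m.val, lt_of_lt_of_le m.isLt hνq⟩ : Fin q))
      (Finset.univ : Finset (Fin ν)) := by
    intro a _ b _ hab2
    have := congrArg Fin.val hab2
    exact Fin.ext this
  calc ν = (Finset.univ : Finset (Fin ν)).card := by simp
  _ ≤ (Finset.univ.filter fun i => Balanced σ β i).card := by
      apply Finset.card_le_card_of_injOn _ _ hinj2
      intro m _
      rw [Finset.mem_coe, Finset.mem_filter]
      exact ⟨Finset.mem_univ _, hbalanced _ m.isLt⟩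

/-- `ν_max(σ)` equals the maximum of the balance number `b(β,σ)` over
all bench collections `β`: the maximum is attained and is an upper bound. -/
theorem statement5 (n : ℕ) (hn : 1 ≤ n) (σ : Fin n → Bool) :
    (∃ β : BenchCollection n (n / 3), balance σ β = nuMax σ) ∧
    ∀ β : BenchCollection n (n / 3), balance σ β ≤ nuMax σ := by
  have hn0 : 0 < n := hn
  have hub : ∀ β : BenchCollection n (n / 3), balance σ β ≤ nuMax σ :=
    fun β => balance_le_nuMax hn0 σ β
  obtain ⟨β, hβ⟩ := exists_bench_ge_nuMax hn0 σ
  exact ⟨⟨β, le_antisymm (hub β) hβ⟩, hub⟩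

end Napkin
end

section
/- Fix a positive integer n, write n = 3q + r with q = ⌊n/3⌋, fix σ ∈ {±1}^n, and set h = max(h(σ), h(−σ)). If h ≤ q + r, then ν_max(σ) = q. -/
namespace Napkin

variable {n q : ℕ}

-- ===================== auxiliary development =====================

open Fin.CommRing

section Aux

variable {σ : Fin n → Bool} {w : Equiv.Perm (Fin n)}

lemma leftNapkin_eq [NeZero n] (s : Fin n) : leftNapkin s = s - 1 := by
  have hn : 0 < n := Nat.pos_of_ne_zero (NeZero.ne n)
  apply Fin.ext
  rw [Fin.sub_def]
  simp only [leftNapkin, Fin.val_one']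
  rcases Nat.lt_or_ge 1 n with h | h
  · have : 1 % n = 1 := Nat.mod_eq_of_lt h
    rw [this]
    congr 1
    omega
  · have h1 : n = 1 := by omega
    subst h1
    simp [Nat.mod_one]

lemma leftNapkin_eq_iff [NeZero n] (a b : Fin n) : leftNapkin a = b ↔ a = b + 1 := by
  rw [leftNapkin_eq, sub_eq_iff_eq_add]

lemma mem_take_finRange (t : ℕ) (j : Fin n) :
    j ∈ (List.finRange n).take t ↔ (j : ℕ) < t := by
  constructor
  · intro h
    obtain ⟨i, hi, hg⟩ := List.getElem_of_mem h
    rw [List.getElem_take] at hg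
    have hlen : i < t := by
      have := List.length_take (i := t) (l := List.finRange n)
      simp at hi
      omega
    rw [List.getElem_finRange] at hg
    subst hg
    simpa using hlen
  · intro h
    refine List.mem_take_iff_getElem.mpr ⟨(j:ℕ), ?_, ?_⟩
    · simp [List.length_take]
      omega
    · rw [List.getElem_finRange]
      apply Fin.ext
      simp

lemma nodup_take_finRange (t : ℕ) : ((List.finRange n).take t).Nodup :=
  (List.nodup_finRange n).sublist (List.take_sublist _ _)

lemma finRange_split (d : Fin n) :
    List.finRange n
      = (List.finRange n).take (d : ℕ) ++ d :: (List.finRange n).drop ((d : ℕ) + 1) := by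
  conv_lhs => rw [← List.take_append_drop (d : ℕ) (List.finRange n)]
  congr 1
  rw [List.drop_eq_getElem_cons (by simpa using d.isLt)]
  congr 1
  rw [List.getElem_finRange]
  apply Fin.ext; simp

end Aux

section Fold

variable (σ : Fin n → Bool) (w : Equiv.Perm (Fin n))

/-- One step of the dining process. -/
def dstep (st : Finset (Fin n) × Finset (Fin n)) (j : Fin n) :
    Finset (Fin n) × Finset (Fin n) :=
  if (if σ j then w.symm j else leftNapkin (w.symm j)) ∉ st.1 then
    (insert (if σ j then w.symm j else leftNapkin (w.symm j)) st.1, st.2)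
  else if (if σ j then leftNapkin (w.symm j) else w.symm j) ∉ st.1 then
    (insert (if σ j then leftNapkin (w.symm j) else w.symm j) st.1, st.2)
  else (st.1, insert j st.2)

lemma dine_eq : dine σ w = (List.finRange n).foldl (dstep σ w) (∅, ∅) := rfl

lemma dstep_fst_subset (st : Finset (Fin n) × Finset (Fin n)) (j : Fin n) :
    st.1 ⊆ (dstep σ w st j).1 := by
  unfold dstep
  split_ifs <;> simp [Finset.subset_insert, Finset.Subset.refl]

lemma dstep_snd_subset (st : Finset (Fin n) × Finset (Fin n)) (j : Fin n) :
    st.2 ⊆ (dstep σ w st j).2 := by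
  unfold dstep
  split_ifs <;> simp [Finset.subset_insert, Finset.Subset.refl]

lemma foldl_fst_subset (l : List (Fin n)) (st : Finset (Fin n) × Finset (Fin n)) :
    st.1 ⊆ (l.foldl (dstep σ w) st).1 := by
  induction l generalizing st with
  | nil => simp
  | cons j t ih => exact (dstep_fst_subset σ w st j).trans (ih _)

lemma foldl_snd_subset (l : List (Fin n)) (st : Finset (Fin n) × Finset (Fin n)) :
    st.2 ⊆ (l.foldl (dstep σ w) st).2 := by
  induction l generalizing st with
  | nil => simp
  | cons j t ih => exact (dstep_snd_subset σ w st j).trans (ih _)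

/-- Every claimed napkin is adjacent to the seat of some processed diner. -/
lemma foldl_fst_adj (l : List (Fin n)) (st : Finset (Fin n) × Finset (Fin n)) :
    ∀ v ∈ (l.foldl (dstep σ w) st).1,
      v ∈ st.1 ∨ ∃ j ∈ l, v = w.symm j ∨ v = leftNapkin (w.symm j) := by
  induction l generalizing st with
  | nil => intro v hv; exact Or.inl hv
  | cons j t ih =>
    intro v hv
    rcases ih (dstep σ w st j) v hv with h | ⟨j', hj', h⟩
    · have : v ∈ st.1 ∨ v = w.symm j ∨ v = leftNapkin (w.symm j) := by
        revert h; unfold dstep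
        split_ifs with h1 h2 h2 <;> intro h <;>
          simp only [Finset.mem_insert] at h <;> first
          | (rcases h with h | h
             · subst h
               cases hσ : σ j <;> simp [hσ]
             · exact Or.inl h)
          | exact Or.inl h
      rcases this with h | h
      · exact Or.inl h
      · exact Or.inr ⟨j, by simp, h⟩
    · exact Or.inr ⟨j', by simp [hj'], h⟩

end Fold

section Claim

variable [NeZero n] (σ : Fin n → Bool) (w : Equiv.Perm (Fin n))

/-- The preferred napkin of diner `d`. -/
def prefNap (d : Fin n) : Fin n := if σ d then w.symm d else leftNapkin (w.symm d)

lemma dstep_eq_insert (st : Finset (Fin n) × Finset (Fin n)) (x : Fin n)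
    (h : prefNap σ w x ∉ st.1) :
    (dstep σ w st x) = (insert (prefNap σ w x) st.1, st.2) := by
  unfold dstep prefNap at *
  rw [if_pos h]

lemma claim_mem (l : List (Fin n)) (hnd : l.Nodup) (x : Fin n) (hx : x ∈ l)
    (hg : ∀ j ∈ l, j ≠ x →
      w.symm j ≠ prefNap σ w x ∧ leftNapkin (w.symm j) ≠ prefNap σ w x) :
    prefNap σ w x ∈ (l.foldl (dstep σ w) (∅, ∅)).1 := by
  obtain ⟨p, s, rfl⟩ := List.append_of_mem hx
  rw [List.foldl_append]
  set st := p.foldl (dstep σ w) (∅, ∅) with hst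
  have hxp : x ∉ p := by
    rcases List.nodup_append.mp hnd with ⟨-, h2, h3⟩
    intro hmem
    exact h3 x hmem x List.mem_cons_self rfl
  have hfree : prefNap σ w x ∉ st.1 := by
    intro hmem
    rcases foldl_fst_adj σ w p (∅, ∅) _ hmem with h | ⟨j, hj, h⟩
    · simp at h
    · have hjx : j ≠ x := fun e => hxp (e ▸ hj)
      have := hg j (List.mem_append_left _ hj) hjx
      rcases h with h | h
      · exact this.1 h.symm
      · exact this.2 h.symm
  rw [List.foldl_cons, dstep_eq_insert σ w st x hfree]
  exact foldl_fst_subset σ w s _ (Finset.mem_insert_self _ _)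

lemma starved (d : Fin n)
    (h1 : w.symm d ∈ (((List.finRange n).take (d : ℕ)).foldl (dstep σ w) (∅, ∅)).1)
    (h2 : leftNapkin (w.symm d) ∈ (((List.finRange n).take (d : ℕ)).foldl (dstep σ w) (∅, ∅)).1) :
    d ∈ napkinless σ w := by
  unfold napkinless
  rw [dine_eq, finRange_split d, List.foldl_append, List.foldl_cons]
  set st := ((List.finRange n).take (d : ℕ)).foldl (dstep σ w) (∅, ∅) with hst
  have hd : dstep σ w st d = (st.1, insert d st.2) := by
    unfold dstep
    cases hσ : σ d <;> simp [hσ, h1, h2]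
  rw [hd]
  exact foldl_snd_subset σ w _ _ (Finset.mem_insert_self _ _)

/-- The core starvation lemma: a diner seated between an earlier-arriving
right-preferring diner (one seat to the left) and an earlier-arriving
left-preferring diner (one seat to the right) gets no napkin. -/
lemma core_starve (X Y Z : Fin n) (hσX : σ X = true) (hσY : σ Y = false)
    (hXZ : X < Z) (hYZ : Y < Z)
    (hsZ : w.symm Z = w.symm X + 1) (hsY : w.symm Y = w.symm X + 2) :
    Z ∈ napkinless σ w := by
  set sX := w.symm X with hsX
  set L := (List.finRange n).take (Z : ℕ) with hL
  have hZL : ∀ j ∈ L, j ≠ Z := by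
    intro j hj
    have := (mem_take_finRange _ j).mp hj
    intro e; subst e; exact lt_irrefl _ this
  -- claim of X
  have hcX : sX ∈ (L.foldl (dstep σ w) (∅, ∅)).1 := by
    have hpX : prefNap σ w X = sX := by simp [prefNap, hσX, hsX]
    rw [← hpX]
    refine claim_mem σ w L (nodup_take_finRange _) X
      ((mem_take_finRange _ _).mpr (Fin.lt_def.mp hXZ)) ?_
    intro j hj hjX
    rw [hpX]
    constructor
    · intro e
      exact hjX (w.symm.injective e)
    · intro e
      rw [leftNapkin_eq_iff] at e
      rw [← hsZ] at e
      exact hZL j hj (w.symm.injective e)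
  -- claim of Y
  have hcY : sX + 1 ∈ (L.foldl (dstep σ w) (∅, ∅)).1 := by
    have hpY : prefNap σ w Y = sX + 1 := by
      rw [prefNap, hσY]
      simp only [Bool.false_eq_true, if_false]
      rw [leftNapkin_eq, hsY]
      ring
    rw [← hpY]
    refine claim_mem σ w L (nodup_take_finRange _) Y
      ((mem_take_finRange _ _).mpr (Fin.lt_def.mp hYZ)) ?_
    intro j hj hjY
    rw [hpY]
    constructor
    · intro e
      rw [← hsZ] at e
      exact hZL j hj (w.symm.injective e)
    · intro e
      rw [leftNapkin_eq_iff] at e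
      have : w.symm j = w.symm Y := by rw [hsY]; rw [e]; ring
      exact hjY (w.symm.injective this)
  -- starve Z
  apply starved σ w Z
  · rw [hsZ]; exact hcY
  · rw [hsZ, leftNapkin_eq]
    have : sX + 1 - 1 = sX := by ring
    rw [this]
    exact hcX

end Claim

section Upper

variable (σ : Fin n → Bool) (w : Equiv.Perm (Fin n))

lemma dstep_cases (st : Finset (Fin n) × Finset (Fin n)) (j : Fin n) :
    (∃ v, (v = w.symm j ∨ v = leftNapkin (w.symm j)) ∧ v ∉ st.1 ∧
        dstep σ w st j = (insert v st.1, st.2)) ∨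
    (w.symm j ∈ st.1 ∧ leftNapkin (w.symm j) ∈ st.1 ∧
        dstep σ w st j = (st.1, insert j st.2)) := by
  unfold dstep
  cases hσ : σ j <;> simp only [Bool.false_eq_true, if_false, if_true] <;>
    split_ifs with h1 h2 <;>
  first
    | exact Or.inl ⟨_, Or.inl rfl, by assumption, rfl⟩
    | exact Or.inl ⟨_, Or.inr rfl, by assumption, rfl⟩
    | exact Or.inr ⟨by assumption, by assumption, rfl⟩
    | exact Or.inr ⟨not_not.mp (by assumption), by assumption, rfl⟩
    | exact Or.inr ⟨by assumption, not_not.mp (by assumption), rfl⟩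
    | exact Or.inr ⟨not_not.mp (by assumption), not_not.mp (by assumption), rfl⟩

lemma ownership (l : List (Fin n)) (hnd : l.Nodup) :
    ∃ own : Fin n → Fin n,
      (∀ v ∈ (l.foldl (dstep σ w) (∅, ∅)).1,
          own v ∈ l ∧ own v ∉ (l.foldl (dstep σ w) (∅, ∅)).2 ∧
          (v = w.symm (own v) ∨ v = leftNapkin (w.symm (own v)))) ∧
      (∀ v ∈ (l.foldl (dstep σ w) (∅, ∅)).1, ∀ v' ∈ (l.foldl (dstep σ w) (∅, ∅)).1,
          own v = own v' → v = v') ∧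
      (∀ j ∈ (l.foldl (dstep σ w) (∅, ∅)).2,
          j ∈ l ∧ w.symm j ∈ (l.foldl (dstep σ w) (∅, ∅)).1 ∧
          leftNapkin (w.symm j) ∈ (l.foldl (dstep σ w) (∅, ∅)).1) := by
  induction l using List.reverseRecOn with
  | nil => exact ⟨id, by simp, by simp, by simp⟩
  | append_singleton l j ih =>
    have hjl : j ∉ l := by
      have := List.disjoint_of_nodup_append hnd
      intro hm
      exact this hm (List.mem_singleton_self j)
    obtain ⟨own, ih1, ih2, ih3⟩ := ih (hnd.sublist (List.sublist_append_left _ _))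
    set st := l.foldl (dstep σ w) (∅, ∅) with hst
    have hfold : (l ++ [j]).foldl (dstep σ w) (∅, ∅) = dstep σ w st j := by
      rw [List.foldl_append]; rfl
    rcases dstep_cases σ w st j with ⟨v, hv, hvn, he⟩ | ⟨hp, ho, he⟩
    · refine ⟨Function.update own v j, ?_, ?_, ?_⟩
      · intro u hu
        rw [hfold, he] at hu
        simp only [Finset.mem_insert] at hu
        rcases hu with rfl | hu
        · rw [Function.update_self]
          refine ⟨by simp, ?_, ?_⟩
          · rw [hfold, he]
            intro hmem
            exact hjl (ih3 j hmem).1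
          · rcases hv with h | h <;> [exact Or.inl h; exact Or.inr h]
        · have hne : u ≠ v := fun e => hvn (by rw [← e]; exact hu)
          rw [Function.update_of_ne hne]
          obtain ⟨m1, m2, m3⟩ := ih1 u hu
          exact ⟨List.mem_append_left _ m1, by rw [hfold, he]; exact m2, m3⟩
      · intro u hu u' hu' heq
        rw [hfold, he] at hu hu'
        simp only [Finset.mem_insert] at hu hu'
        rcases hu with rfl | hu <;> rcases hu' with rfl | hu'
        · rfl
        · rw [Function.update_self, Function.update_of_ne (fun e => hvn (by rw [← e]; exact hu'))] at heq
          exact absurd (ih1 u' hu').1 (heq ▸ hjl)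
        · rw [Function.update_self, Function.update_of_ne (fun e => hvn (by rw [← e]; exact hu))] at heq
          exact absurd (ih1 u hu).1 (heq.symm ▸ hjl)
        · rw [Function.update_of_ne (fun e => hvn (by rw [← e]; exact hu)),
            Function.update_of_ne (fun e => hvn (by rw [← e]; exact hu'))] at heq
          exact ih2 u hu u' hu' heq
      · intro j' hj'
        rw [hfold, he] at hj'
        obtain ⟨m1, m2, m3⟩ := ih3 j' hj'
        rw [hfold, he]
        exact ⟨List.mem_append_left _ m1, Finset.mem_insert_of_mem m2,
          Finset.mem_insert_of_mem m3⟩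
    · refine ⟨own, ?_, ?_, ?_⟩
      · intro u hu
        rw [hfold, he] at hu
        obtain ⟨m1, m2, m3⟩ := ih1 u hu
        refine ⟨List.mem_append_left _ m1, ?_, m3⟩
        rw [hfold, he]
        simp only [Finset.mem_insert]
        rintro (h | h)
        · exact hjl (h ▸ m1)
        · exact m2 h
      · intro u hu u' hu' heq
        rw [hfold, he] at hu hu'
        exact ih2 u hu u' hu' heq
      · intro j' hj'
        rw [hfold, he] at hj'
        simp only [Finset.mem_insert] at hj'
        rw [hfold, he]
        rcases hj' with rfl | hj'
        · exact ⟨by simp, hp, ho⟩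
        · obtain ⟨m1, m2, m3⟩ := ih3 j' hj'
          exact ⟨List.mem_append_left _ m1, m2, m3⟩

lemma ownership_dine :
    ∃ own : Fin n → Fin n,
      (∀ v ∈ (dine σ w).1,
          own v ∉ (dine σ w).2 ∧
          (v = w.symm (own v) ∨ v = leftNapkin (w.symm (own v)))) ∧
      (∀ v ∈ (dine σ w).1, ∀ v' ∈ (dine σ w).1, own v = own v' → v = v') ∧
      (∀ j ∈ (dine σ w).2, w.symm j ∈ (dine σ w).1 ∧
          leftNapkin (w.symm j) ∈ (dine σ w).1) := by
  obtain ⟨own, h1, h2, h3⟩ := ownership σ w (List.finRange n) (List.nodup_finRange n)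
  rw [dine_eq]
  exact ⟨own, fun v hv => ⟨(h1 v hv).2.1, (h1 v hv).2.2⟩, h2,
    fun j hj => ⟨(h3 j hj).2.1, (h3 j hj).2.2⟩⟩

end Upper

section UpperBound

variable [NeZero n] (σ : Fin n → Bool) (w : Equiv.Perm (Fin n))

lemma leftNapkin_injective [NeZero n] : Function.Injective (leftNapkin : Fin n → Fin n) := by
  intro a b e
  rw [leftNapkin_eq, leftNapkin_eq] at e
  exact sub_left_inj.mp e

lemma fin2_add_one_eq_sub_one : ∀ s : Fin 2, s + 1 = s - 1 := by decide

lemma one_ne_zero_fin (h : 2 ≤ n) : (1 : Fin n) ≠ 0 := by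
  intro e
  have := congrArg Fin.val e
  rw [Fin.val_one'] at this
  simp at this
  omega

lemma two_val_fin (h : 3 ≤ n) : ((2 : Fin n) : ℕ) = 2 := by
  have h1 : 1 % n = 1 := Nat.mod_eq_of_lt (by omega)
  have : (2 : Fin n) = 1 + 1 := by norm_num
  rw [this, Fin.val_add, Fin.val_one', h1]
  exact Nat.mod_eq_of_lt (by omega)

lemma nu_le_third : nu σ w ≤ n / 3 := by
  obtain ⟨own, h1, h2, h3⟩ := ownership_dine σ w
  set N := napkinless σ w with hN
  -- the right napkin of a napkinless diner is owned by the diner one seat right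
  have hseatR : ∀ j ∈ N, own (w.symm j) ∉ N ∧ w.symm (own (w.symm j)) = w.symm j + 1 := by
    intro j hj
    obtain ⟨hr, hl⟩ := h3 j hj
    obtain ⟨honot, hrel⟩ := h1 (w.symm j) hr
    refine ⟨honot, ?_⟩
    rcases hrel with h | h
    · have : own (w.symm j) = j := w.symm.injective h.symm
      rw [this] at honot
      exact absurd hj honot
    · rw [leftNapkin_eq] at h
      exact sub_eq_iff_eq_add.mp h.symm
  -- the left napkin of a napkinless diner is owned by the diner one seat left
  have hseatL : ∀ j ∈ N, own (leftNapkin (w.symm j)) ∉ N ∧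
      w.symm (own (leftNapkin (w.symm j))) = w.symm j - 1 := by
    intro j hj
    obtain ⟨hr, hl⟩ := h3 j hj
    obtain ⟨honot, hrel⟩ := h1 _ hl
    refine ⟨honot, ?_⟩
    rcases hrel with h | h
    · rw [← h, leftNapkin_eq]
    · have hinj : w.symm j = w.symm (own (leftNapkin (w.symm j))) := leftNapkin_injective h
      have hoj : own (leftNapkin (w.symm j)) = j := w.symm.injective hinj.symm
      rw [hoj] at honot
      exact absurd hj honot
  -- spacing 1 : no two napkinless diners at adjacent seats
  have hsp1 : ∀ j ∈ N, ∀ j' ∈ N, w.symm j' ≠ w.symm j + 1 := by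
    intro j hj j' hj' he
    obtain ⟨ho1, ho2⟩ := hseatR j hj
    rw [← he] at ho2
    exact ho1 (w.symm.injective ho2 ▸ hj')
  -- spacing 2 : no two napkinless diners two seats apart
  have hsp2 : ∀ j ∈ N, ∀ j' ∈ N, j ≠ j' → w.symm j' ≠ w.symm j + 2 := by
    intro j hj j' hj' hne he
    have hn2 : 2 ≤ n := by
      rcases Nat.lt_or_ge n 2 with h | h
      · interval_cases n
        · exact absurd rfl (NeZero.ne 0)
        · exact absurd (Subsingleton.elim j j') hne
      · exact h
    -- own of napkin (w.symm j) sits at seat w.symm j + 1 and is on no bench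
    obtain ⟨ho1, ho2⟩ := hseatR j hj
    obtain ⟨ho1', ho2'⟩ := hseatL j' hj'
    -- the left napkin of j' is napkin (w.symm j + 1)
    have hlj' : leftNapkin (w.symm j') = w.symm j + 1 := by
      rw [leftNapkin_eq, he]; ring
    have hmem1 : w.symm j ∈ (dine σ w).1 := (h3 j hj).1
    have hmem2 : leftNapkin (w.symm j') ∈ (dine σ w).1 := (h3 j' hj').2
    -- both owners sit at seat w.symm j + 1
    have hseq : w.symm (own (leftNapkin (w.symm j'))) = w.symm (own (w.symm j)) := by
      rw [ho2, ho2', he]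
      ring
    have hoeq : own (leftNapkin (w.symm j')) = own (w.symm j) := w.symm.injective hseq
    have : leftNapkin (w.symm j') = w.symm j := h2 _ hmem2 _ hmem1 hoeq
    rw [hlj'] at this
    have h10 : (1 : Fin n) = 0 := by
      have := add_left_cancel (a := w.symm j) (b := (1:Fin n)) (c := 0) (by rw [add_zero]; exact this)
      exact this
    exact one_ne_zero_fin hn2 h10
  -- empty case
  rcases Finset.eq_empty_or_nonempty N with he | ⟨j0, hj0⟩
  · unfold nu
    rw [← hN, he]
    simp
  -- n ≥ 2
  have hn2 : 2 ≤ n := by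
    by_contra hlt
    have hn1 : n = 1 := by have := Nat.pos_of_ne_zero (NeZero.ne n); omega
    subst hn1
    exact hsp1 j0 hj0 j0 hj0 (Subsingleton.elim _ _)
  -- n ≥ 3
  have hn3 : 3 ≤ n := by
    by_contra hlt
    have hn2' : n = 2 := by omega
    subst hn2'
    obtain ⟨ho1, ho2⟩ := hseatR j0 hj0
    obtain ⟨ho1', ho2'⟩ := hseatL j0 hj0
    have hmm : w.symm j0 + 1 = w.symm j0 - 1 := fin2_add_one_eq_sub_one _
    have hseq : w.symm (own (w.symm j0)) = w.symm (own (leftNapkin (w.symm j0))) := by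
      rw [ho2, ho2', hmm]
    have hoeq : own (w.symm j0) = own (leftNapkin (w.symm j0)) := w.symm.injective hseq
    have heq : w.symm j0 = leftNapkin (w.symm j0) :=
      h2 _ (h3 j0 hj0).1 _ (h3 j0 hj0).2 hoeq
    rw [leftNapkin_eq] at heq
    have : (1 : Fin 2) = 0 := by
      have h' := sub_eq_self.mp heq.symm
      exact h'
    exact one_ne_zero_fin le_rfl this
  -- triple counting
  set N' := N.image (fun j => w.symm j) with hN'
  have hcard : N'.card = N.card := Finset.card_image_of_injective _ w.symm.injective
  have hmemN' : ∀ s ∈ N', ∃ j ∈ N, w.symm j = s := by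
    intro s hs
    obtain ⟨j, hj, hjs⟩ := Finset.mem_image.mp hs
    exact ⟨j, hj, hjs⟩
  set T : Fin n → Finset (Fin n) := fun s => {s, s + 1, s + 2} with hT
  have hTcard : ∀ s, (T s).card = 3 := by
    intro s
    rw [hT]
    have e1 : s ≠ s + 1 := by
      intro e
      exact one_ne_zero_fin hn2 (by have := add_left_cancel (a := s) (b := (0:Fin n)) (c := 1) (by rw [add_zero]; exact e); exact this.symm)
    have e2 : s ≠ s + 2 := by
      intro e
      have h20 : (2 : Fin n) = 0 := by
        have := add_left_cancel (a := s) (b := (0:Fin n)) (c := 2) (by rw [add_zero]; exact e)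
        exact this.symm
      have := congrArg Fin.val h20
      rw [two_val_fin hn3] at this
      simp at this
    have e3 : s + 1 ≠ s + 2 := by
      intro e
      have := add_left_cancel e
      have hv := congrArg Fin.val this
      rw [Fin.val_one', two_val_fin hn3, Nat.mod_eq_of_lt (by omega)] at hv
      omega
    rw [Finset.card_insert_of_notMem (by simp [e1, e2]),
      Finset.card_insert_of_notMem (by simp [e3])]
    simp
  have hdisj : ∀ s ∈ N', ∀ t ∈ N', s ≠ t → Disjoint (T s) (T t) := by
    intro s hs t ht hst
    obtain ⟨j, hj, rfl⟩ := hmemN' s hs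
    obtain ⟨j', hj', rfl⟩ := hmemN' t ht
    rw [Finset.disjoint_left]
    intro u hus hut
    simp only [hT, Finset.mem_insert, Finset.mem_singleton] at hus hut
    have hjj' : j ≠ j' := fun e => hst (by rw [e])
    -- helper to turn seat equations into contradictions
    rcases hus with rfl | rfl | rfl <;> rcases hut with h | h | h
    · exact hst (by rw [h])
    · exact hsp1 j' hj' j hj h
    · exact hsp2 j' hj' j hj (Ne.symm hjj') h
    · exact hsp1 j hj j' hj' h.symm
    · exact hst (by rw [add_left_injective 1 h])
    · exact hsp1 j' hj' j hj (by linear_combination h)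
    · exact hsp2 j hj j' hj' hjj' h.symm
    · exact hsp1 j hj j' hj' (by linear_combination -h)
    · exact hst (by rw [add_left_injective 2 h])
  have hbig : N'.card * 3 ≤ n := by
    have hsub : N'.biUnion T ⊆ Finset.univ := Finset.subset_univ _
    have := Finset.card_le_card hsub
    rw [Finset.card_biUnion hdisj] at this
    rw [Finset.card_univ, Fintype.card_fin] at this
    calc N'.card * 3 = ∑ _s ∈ N', 3 := by rw [Finset.sum_const, smul_eq_mul, mul_comm]
    _ = ∑ s ∈ N', (T s).card := by exact Finset.sum_congr rfl fun s _ => (hTcard s).symm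
    _ ≤ n := this
  have : nu σ w = N'.card := by rw [hcard]; rfl
  rw [this]
  omega

end UpperBound

section Feeders

variable (σ : Fin n → Bool)

/-- position `t` holds a right-preferring diner -/
def pT : ℕ → Prop := fun t => (if h : t < n then σ ⟨t, h⟩ else false) = true

/-- position `t` holds a left-preferring diner -/
def pF : ℕ → Prop := fun t => (if h : t < n then !σ ⟨t, h⟩ else false) = true

instance : DecidablePred (pT σ) := fun _ => by unfold pT; infer_instance
instance : DecidablePred (pF σ) := fun _ => by unfold pF; infer_instance

/-- position `t` is in no pair among the first `q` pairs -/
def pU (q : ℕ) : ℕ → Prop := fun t =>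
  t < n ∧ (∀ j < q, Nat.nth (pT σ) j ≠ t) ∧ (∀ j < q, Nat.nth (pF σ) j ≠ t)

noncomputable instance (q : ℕ) : DecidablePred (pU σ q) := fun _ => Classical.dec _

lemma pT_lt {t : ℕ} (h : pT σ t) : t < n := by
  unfold pT at h
  by_contra hc
  rw [dif_neg hc] at h
  exact Bool.false_ne_true h

lemma pF_lt {t : ℕ} (h : pF σ t) : t < n := by
  unfold pF at h
  by_contra hc
  rw [dif_neg hc] at h
  exact Bool.false_ne_true h

lemma pT_iff {t : ℕ} (h : t < n) : pT σ t ↔ σ ⟨t, h⟩ = true := by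
  unfold pT; rw [dif_pos h]

lemma pF_iff {t : ℕ} (h : t < n) : pF σ t ↔ σ ⟨t, h⟩ = false := by
  unfold pF; rw [dif_pos h]; simp

lemma hfT : (setOf (pT σ)).Finite :=
  (Set.finite_Iio n).subset (fun _ ht => pT_lt σ ht)

lemma hfF : (setOf (pF σ)).Finite :=
  (Set.finite_Iio n).subset (fun _ ht => pF_lt σ ht)

lemma hfU (q : ℕ) : (setOf (pU σ q)).Finite :=
  (Set.finite_Iio n).subset (fun _ ht => ht.1)

/-- the number of elements below `n` of a bounded predicate equals the `toFinset` card -/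
lemma card_of_bounded {p : ℕ → Prop} [DecidablePred p] (hf : (setOf p).Finite)
    (hb : ∀ t, p t → t < n) : hf.toFinset.card = Nat.count p n := by
  rw [Nat.count_eq_card_filter_range]
  congr 1
  ext x
  simp only [Set.Finite.mem_toFinset, Set.mem_setOf_eq, Finset.mem_filter, Finset.mem_range]
  exact ⟨fun h => ⟨hb x h, h⟩, fun h => h.2⟩

/-- easy Galois: `j < count p t → nth p j < t` is `Nat.nth_lt_of_lt_count`;
here the converse, assuming `j` is within the card. -/
lemma lt_count_of_nth_lt {p : ℕ → Prop} [DecidablePred p] (hf : (setOf p).Finite)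
    {j t : ℕ} (hj : j < hf.toFinset.card) (h : Nat.nth p j < t) : j < Nat.count p t := by
  have h1 : Nat.count p (Nat.nth p j + 1) = j + 1 := by
    apply Nat.count_nth_succ
    intro hf'
    have : hf'.toFinset.card = hf.toFinset.card := by
      congr 1
    omega
  have h2 := Nat.count_monotone p (show Nat.nth p j + 1 ≤ t from h)
  omega

lemma count_nth_eq {p : ℕ → Prop} [DecidablePred p] (hf : (setOf p).Finite)
    {j : ℕ} (hj : j < hf.toFinset.card) : Nat.count p (Nat.nth p j) = j := by
  apply Nat.count_nth
  intro hf'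
  have : hf'.toFinset.card = hf.toFinset.card := by congr 1
  omega

lemma nth_mem' {p : ℕ → Prop} (hf : (setOf p).Finite)
    {j : ℕ} (hj : j < hf.toFinset.card) : p (Nat.nth p j) := by
  apply Nat.nth_mem
  intro hf'
  have : hf'.toFinset.card = hf.toFinset.card := by congr 1
  omega

/-- prefix sums versus counts -/
lemma count_sum (t : ℕ) (h : t ≤ n) :
    (∑ j ∈ Finset.univ.filter (fun j : Fin n => (j : ℕ) < t), sign (σ j))
      = (Nat.count (pT σ) t : ℤ) - (Nat.count (pF σ) t : ℤ) ∧
    Nat.count (pT σ) t + Nat.count (pF σ) t = t := by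
  induction t with
  | zero =>
    refine ⟨?_, by simp⟩
    rw [Nat.count_zero, Nat.count_zero]
    rw [show ((0:ℕ):ℤ) - ((0:ℕ):ℤ) = 0 by ring]
    apply Finset.sum_eq_zero
    intro j hj
    simp at hj
  | succ t ih =>
    have ht : t < n := h
    obtain ⟨ih1, ih2⟩ := ih (Nat.le_of_lt h)
    have hins : Finset.univ.filter (fun j : Fin n => (j : ℕ) < t + 1)
        = insert (⟨t, ht⟩ : Fin n) (Finset.univ.filter (fun j : Fin n => (j : ℕ) < t)) := by
      ext j
      simp only [Finset.mem_filter, Finset.mem_univ, true_and, Finset.mem_insert, Fin.ext_iff]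
      omega
    rw [hins, Finset.sum_insert (by simp), Nat.count_succ, Nat.count_succ]
    cases hσt : σ ⟨t, ht⟩
    · have h1 : ¬ pT σ t := by rw [pT_iff σ ht]; simp [hσt]
      have h2 : pF σ t := by rw [pF_iff σ ht]; exact hσt
      rw [if_neg h1, if_pos h2]
      constructor
      · rw [ih1]
        simp [sign, hσt]
        push_cast
        ring
      · omega
    · have h1 : pT σ t := by rw [pT_iff σ ht]; exact hσt
      have h2 : ¬ pF σ t := by rw [pF_iff σ ht]; simp [hσt]
      rw [if_pos h1, if_neg h2]
      constructor
      · rw [ih1]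
        simp [sign, hσt]
        push_cast
        ring
      · omega

end Feeders

section FeedersCount

variable (σ : Fin n → Bool)

lemma count_pU_le (q t : ℕ) (hqT : q ≤ Nat.count (pT σ) n) (hqF : q ≤ Nat.count (pF σ) n)
    (ht : t ≤ n) :
    Nat.count (pU σ q) t + min q (Nat.count (pT σ) t) + min q (Nat.count (pF σ) t) ≤ t := by
  have hcT : (hfT σ).toFinset.card = Nat.count (pT σ) n :=
    card_of_bounded _ (fun t => pT_lt σ)
  have hcF : (hfF σ).toFinset.card = Nat.count (pF σ) n :=
    card_of_bounded _ (fun t => pF_lt σ)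
  set RT := (Finset.range (min q (Nat.count (pT σ) t))).image (Nat.nth (pT σ)) with hRT
  set RF := (Finset.range (min q (Nat.count (pF σ) t))).image (Nat.nth (pF σ)) with hRF
  set RU := (Finset.range t).filter (pU σ q) with hRU
  have hTmono := Nat.count_monotone (pT σ) ht
  have hFmono := Nat.count_monotone (pF σ) ht
  have hRTsub : RT ⊆ Finset.range t := by
    intro u hu
    obtain ⟨j, hj, rfl⟩ := Finset.mem_image.mp hu
    rw [Finset.mem_range] at hj ⊢
    exact Nat.nth_lt_of_lt_count (by omega)
  have hRFsub : RF ⊆ Finset.range t := by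
    intro u hu
    obtain ⟨j, hj, rfl⟩ := Finset.mem_image.mp hu
    rw [Finset.mem_range] at hj ⊢
    exact Nat.nth_lt_of_lt_count (by omega)
  have hRUsub : RU ⊆ Finset.range t := Finset.filter_subset _ _
  have cardRT : RT.card = min q (Nat.count (pT σ) t) := by
    rw [hRT, Finset.card_image_of_injOn, Finset.card_range]
    intro a ha b hb hab
    rw [Finset.coe_range, Set.mem_Iio] at ha hb
    exact ((Nat.nth_strictMonoOn (hfT σ)).injOn) (show a < (hfT σ).toFinset.card by omega) (show b < (hfT σ).toFinset.card by omega) hab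
  have cardRF : RF.card = min q (Nat.count (pF σ) t) := by
    rw [hRF, Finset.card_image_of_injOn, Finset.card_range]
    intro a ha b hb hab
    rw [Finset.coe_range, Set.mem_Iio] at ha hb
    exact ((Nat.nth_strictMonoOn (hfF σ)).injOn) (show a < (hfF σ).toFinset.card by omega) (show b < (hfF σ).toFinset.card by omega) hab
  have cardRU : RU.card = Nat.count (pU σ q) t := by
    rw [hRU, Nat.count_eq_card_filter_range]
  have hdUT : Disjoint RU RT := by
    rw [Finset.disjoint_left]
    intro u hu hut
    obtain ⟨j, hj, rfl⟩ := Finset.mem_image.mp hut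
    rw [Finset.mem_range] at hj
    have hpu : pU σ q (Nat.nth (pT σ) j) := (Finset.mem_filter.mp hu).2
    exact hpu.2.1 j (by omega) rfl
  have hdUF : Disjoint RU RF := by
    rw [Finset.disjoint_left]
    intro u hu hut
    obtain ⟨j, hj, rfl⟩ := Finset.mem_image.mp hut
    rw [Finset.mem_range] at hj
    have hpu : pU σ q (Nat.nth (pF σ) j) := (Finset.mem_filter.mp hu).2
    exact hpu.2.2 j (by omega) rfl
  have hdTF : Disjoint RT RF := by
    rw [Finset.disjoint_left]
    intro u hut huf
    obtain ⟨j, hj, rfl⟩ := Finset.mem_image.mp hut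
    obtain ⟨j', hj', he⟩ := Finset.mem_image.mp huf
    rw [Finset.mem_range] at hj hj'
    have h1 : pT σ (Nat.nth (pT σ) j) := nth_mem' (hfT σ) (by omega)
    have h2 : pF σ (Nat.nth (pT σ) j) := by rw [← he]; exact nth_mem' (hfF σ) (by omega)
    have hlt := pT_lt σ h1
    have := (pT_iff σ hlt).mp h1
    have := (pF_iff σ hlt).mp h2
    simp_all
  have hunion : (RU ∪ RT ∪ RF).card = RU.card + RT.card + RF.card := by
    rw [Finset.card_union_of_disjoint, Finset.card_union_of_disjoint hdUT]
    rw [Finset.disjoint_union_left]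
    exact ⟨hdUF, hdTF⟩
  have hsub : RU ∪ RT ∪ RF ⊆ Finset.range t := by
    intro u hu
    rcases Finset.mem_union.mp hu with hu | hu
    · rcases Finset.mem_union.mp hu with hu | hu
      · exact hRUsub hu
      · exact hRTsub hu
    · exact hRFsub hu
  have := Finset.card_le_card hsub
  rw [hunion, Finset.card_range] at this
  omega

lemma count_pU_ge (q : ℕ) : n ≤ Nat.count (pU σ q) n + 2 * q := by
  set A := (Finset.range q).image (Nat.nth (pT σ)) with hA
  set B := (Finset.range q).image (Nat.nth (pF σ)) with hB
  have hsub : Finset.range n \ (A ∪ B) ⊆ (Finset.range n).filter (pU σ q) := by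
    intro u hu
    rw [Finset.mem_sdiff, Finset.mem_union] at hu
    obtain ⟨hun, hnot⟩ := hu
    rw [Finset.mem_range] at hun
    rw [Finset.mem_filter, Finset.mem_range]
    refine ⟨hun, hun, ?_, ?_⟩
    · intro j hj he
      exact hnot (Or.inl (Finset.mem_image.mpr ⟨j, Finset.mem_range.mpr hj, he⟩))
    · intro j hj he
      exact hnot (Or.inr (Finset.mem_image.mpr ⟨j, Finset.mem_range.mpr hj, he⟩))
  have h1 := Finset.card_le_card hsub
  have h2 : (Finset.range n \ (A ∪ B)).card ≥ n - 2 * q := by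
    have h3 : (A ∪ B).card ≤ 2 * q := by
      have := Finset.card_union_le A B
      have hA' : A.card ≤ q := le_trans (Finset.card_image_le) (by rw [Finset.card_range])
      have hB' : B.card ≤ q := le_trans (Finset.card_image_le) (by rw [Finset.card_range])
      omega
    have h4 := Finset.le_card_sdiff (A ∪ B) (Finset.range n)
    rw [Finset.card_range] at h4
    omega
  rw [← Nat.count_eq_card_filter_range] at h1
  omega

lemma exists_feeders (q r : ℕ) (hnr : n = 3 * q + r)
    (hS : ∀ t : ℕ, t ≤ n →
      |∑ j ∈ Finset.univ.filter (fun j : Fin n => (j : ℕ) < t), sign (σ j)| ≤ (q : ℤ) + r) :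
    ∃ P M C : Fin q → Fin n,
      (∀ k, σ (P k) = true) ∧ (∀ k, σ (M k) = false) ∧
      (∀ k, P k < C k) ∧ (∀ k, M k < C k) ∧
      Function.Injective P ∧ Function.Injective M ∧ Function.Injective C ∧
      (∀ a b, P a ≠ M b) ∧ (∀ a b, P a ≠ C b) ∧ (∀ a b, M a ≠ C b) := by
  obtain ⟨hsum_n, htot_n⟩ := count_sum σ n le_rfl
  have hSn := hS n le_rfl
  rw [hsum_n, abs_le] at hSn
  have hqT : q ≤ Nat.count (pT σ) n := by omega
  have hqF : q ≤ Nat.count (pF σ) n := by omega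
  have hcT : (hfT σ).toFinset.card = Nat.count (pT σ) n :=
    card_of_bounded _ (fun t => pT_lt σ)
  have hcF : (hfF σ).toFinset.card = Nat.count (pF σ) n :=
    card_of_bounded _ (fun t => pF_lt σ)
  have hcU : (hfU σ q).toFinset.card = Nat.count (pU σ q) n :=
    card_of_bounded _ (fun t ht => ht.1)
  have hUge := count_pU_ge σ q
  set x : Fin q → ℕ := fun k => Nat.nth (pT σ) k with hx
  set y : Fin q → ℕ := fun k => Nat.nth (pF σ) k with hy
  set c : Fin q → ℕ := fun k => Nat.nth (pU σ q) (r + k) with hc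
  have hxmem : ∀ k : Fin q, pT σ (x k) := fun k => nth_mem' (hfT σ) (by
    have := k.isLt; omega)
  have hymem : ∀ k : Fin q, pF σ (y k) := fun k => nth_mem' (hfF σ) (by
    have := k.isLt; omega)
  have hcmem : ∀ k : Fin q, pU σ q (c k) := fun k => nth_mem' (hfU σ q) (by
    have := k.isLt; omega)
  have hxn : ∀ k, x k < n := fun k => pT_lt σ (hxmem k)
  have hyn : ∀ k, y k < n := fun k => pF_lt σ (hymem k)
  have hcn : ∀ k, c k < n := fun k => (hcmem k).1
  -- the key inequality : c k is beyond both x k and y k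
  have key : ∀ k : Fin q, max (x k) (y k) < c k := by
    intro k
    have hkq := k.isLt
    have hcount : Nat.count (pU σ q) (max (x k) (y k) + 1) ≤ r + k := by
      rcases le_or_gt (x k) (y k) with hxy | hxy
      · have hbeq : max (x k) (y k) = y k := max_eq_right hxy
        rw [hbeq]
        have h1 : Nat.count (pF σ) (y k) = k := count_nth_eq (hfF σ) (by omega)
        have h2 : Nat.count (pF σ) (y k + 1) = (k : ℕ) + 1 := by
          rw [Nat.count_succ, if_pos (hymem k), h1]
        have hnotT : ¬ pT σ (y k) := by
          intro hT
          have := (pT_iff σ (hyn k)).mp hT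
          have := (pF_iff σ (hyn k)).mp (hymem k)
          simp_all
        have h3 : Nat.count (pT σ) (y k + 1) = Nat.count (pT σ) (y k) := by
          rw [Nat.count_succ, if_neg hnotT]
          omega
        obtain ⟨hsum, htot⟩ := count_sum σ (y k) (le_of_lt (hyn k))
        have hSy := hS (y k) (le_of_lt (hyn k))
        rw [hsum, abs_le] at hSy
        obtain ⟨hsum1, htot1⟩ := count_sum σ (y k + 1) (hyn k)
        have hle := count_pU_le σ q (y k + 1) hqT hqF (hyn k)
        omega
      · have hbeq : max (x k) (y k) = x k := max_eq_left (le_of_lt hxy)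
        rw [hbeq]
        have h1 : Nat.count (pT σ) (x k) = k := count_nth_eq (hfT σ) (by omega)
        have h2 : Nat.count (pT σ) (x k + 1) = (k : ℕ) + 1 := by
          rw [Nat.count_succ, if_pos (hxmem k), h1]
        have hnotF : ¬ pF σ (x k) := by
          intro hF
          have := (pT_iff σ (hxn k)).mp (hxmem k)
          have := (pF_iff σ (hxn k)).mp hF
          simp_all
        have h3 : Nat.count (pF σ) (x k + 1) = Nat.count (pF σ) (x k) := by
          rw [Nat.count_succ, if_neg hnotF]
          omega
        obtain ⟨hsum, htot⟩ := count_sum σ (x k) (le_of_lt (hxn k))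
        have hSy := hS (x k) (le_of_lt (hxn k))
        rw [hsum, abs_le] at hSy
        obtain ⟨hsum1, htot1⟩ := count_sum σ (x k + 1) (hxn k)
        have hle := count_pU_le σ q (x k + 1) hqT hqF (hxn k)
        omega
    by_contra hle2
    push_neg at hle2
    have hck : Nat.count (pU σ q) (c k + 1) = r + (k : ℕ) + 1 := by
      apply Nat.count_nth_succ
      intro hf
      have : hf.toFinset.card = (hfU σ q).toFinset.card := by congr 1
      omega
    have hmono := Nat.count_monotone (pU σ q) (show c k + 1 ≤ max (x k) (y k) + 1 by omega)
    omega
  -- injectivity helpers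
  have hxinj : ∀ {a b : Fin q}, x a = x b → a = b := by
    intro a b hab
    by_contra hne
    rcases Ne.lt_or_gt hne with h | h <;>
      [exact absurd hab (Nat.ne_of_lt (Nat.nth_lt_nth_of_lt_card (hfT σ) (by exact_mod_cast h) (show (b:ℕ) < (hfT σ).toFinset.card by have := b.isLt; omega)));
       exact absurd hab.symm (Nat.ne_of_lt (Nat.nth_lt_nth_of_lt_card (hfT σ) (by exact_mod_cast h) (show (a:ℕ) < (hfT σ).toFinset.card by have := a.isLt; omega)))]
  have hyinj : ∀ {a b : Fin q}, y a = y b → a = b := by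
    intro a b hab
    by_contra hne
    rcases Ne.lt_or_gt hne with h | h <;>
      [exact absurd hab (Nat.ne_of_lt (Nat.nth_lt_nth_of_lt_card (hfF σ) (by exact_mod_cast h) (show (b:ℕ) < (hfF σ).toFinset.card by have := b.isLt; omega)));
       exact absurd hab.symm (Nat.ne_of_lt (Nat.nth_lt_nth_of_lt_card (hfF σ) (by exact_mod_cast h) (show (a:ℕ) < (hfF σ).toFinset.card by have := a.isLt; omega)))]
  have hcinj : ∀ {a b : Fin q}, c a = c b → a = b := by
    intro a b hab
    by_contra hne
    have hane : r + (a:ℕ) ≠ r + (b:ℕ) := by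
      intro e; exact hne (Fin.ext (by omega))
    rcases Ne.lt_or_gt hane with h | h <;>
      [exact absurd hab (Nat.ne_of_lt (Nat.nth_lt_nth_of_lt_card (hfU σ q) h (show r + (b:ℕ) < (hfU σ q).toFinset.card by have := b.isLt; omega)));
       exact absurd hab.symm (Nat.ne_of_lt (Nat.nth_lt_nth_of_lt_card (hfU σ q) h (show r + (a:ℕ) < (hfU σ q).toFinset.card by have := a.isLt; omega)))]
  have hxy_ne : ∀ a b : Fin q, x a ≠ y b := by
    intro a b he
    have h1 := (pT_iff σ (hxn a)).mp (hxmem a)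
    have h2 := (pF_iff σ (hyn b)).mp (hymem b)
    have hfe : (⟨x a, hxn a⟩ : Fin n) = ⟨y b, hyn b⟩ := Fin.ext he
    rw [hfe] at h1
    rw [h1] at h2
    simp at h2
  have hxc_ne : ∀ a b : Fin q, x a ≠ c b := by
    intro a b he
    exact (hcmem b).2.1 a a.isLt he
  have hyc_ne : ∀ a b : Fin q, y a ≠ c b := by
    intro a b he
    exact (hcmem b).2.2 a a.isLt he
  -- package
  refine ⟨fun k => ⟨x k, hxn k⟩, fun k => ⟨y k, hyn k⟩, fun k => ⟨c k, hcn k⟩,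
    ?_, ?_, ?_, ?_, ?_, ?_, ?_, ?_, ?_, ?_⟩
  · intro k; exact (pT_iff σ (hxn k)).mp (hxmem k)
  · intro k; exact (pF_iff σ (hyn k)).mp (hymem k)
  · intro k
    rw [Fin.lt_def]
    exact lt_of_le_of_lt (le_max_left _ _) (key k)
  · intro k
    rw [Fin.lt_def]
    exact lt_of_le_of_lt (le_max_right _ _) (key k)
  · exact fun a b h => hxinj (congrArg Fin.val h)
  · exact fun a b h => hyinj (congrArg Fin.val h)
  · exact fun a b h => hcinj (congrArg Fin.val h)
  · exact fun a b e => hxy_ne a b (congrArg Fin.val e)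
  · exact fun a b e => hxc_ne a b (congrArg Fin.val e)
  · exact fun a b e => hyc_ne a b (congrArg Fin.val e)

end FeedersCount

section Construction

variable [NeZero n]

lemma exists_seating (σ : Fin n → Bool) (q r : ℕ) (hnr : n = 3 * q + r)
    (P M C : Fin q → Fin n)
    (hσP : ∀ k, σ (P k) = true) (hσM : ∀ k, σ (M k) = false)
    (hPC : ∀ k, P k < C k) (hMC : ∀ k, M k < C k)
    (hPinj : Function.Injective P) (hMinj : Function.Injective M)
    (hCinj : Function.Injective C)
    (hPM : ∀ a b, P a ≠ M b) (hPCne : ∀ a b, P a ≠ C b) (hMCne : ∀ a b, M a ≠ C b) :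
    ∃ w : Equiv.Perm (Fin n), IsSeating w ∧ q ≤ nu σ w := by
  rcases Nat.eq_zero_or_pos q with hq0 | hq1
  · refine ⟨Equiv.refl _, fun i hi => hi, by omega⟩
  have hn3 : 3 ≤ n := by omega
  -- the set of bench diners
  set D : Finset (Fin n) :=
    Finset.univ.image P ∪ Finset.univ.image C ∪ Finset.univ.image M with hD
  have hPD : ∀ k, P k ∈ D := fun k => by
    rw [hD]; exact Finset.mem_union_left _ (Finset.mem_union_left _ (Finset.mem_image_of_mem _ (Finset.mem_univ k)))
  have hCD : ∀ k, C k ∈ D := fun k => by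
    rw [hD]; exact Finset.mem_union_left _ (Finset.mem_union_right _ (Finset.mem_image_of_mem _ (Finset.mem_univ k)))
  have hMD : ∀ k, M k ∈ D := fun k => by
    rw [hD]; exact Finset.mem_union_right _ (Finset.mem_image_of_mem _ (Finset.mem_univ k))
  have hDcard : D.card = 3 * q := by
    rw [hD]
    rw [Finset.card_union_of_disjoint, Finset.card_union_of_disjoint]
    · rw [Finset.card_image_of_injective _ hPinj, Finset.card_image_of_injective _ hCinj,
        Finset.card_image_of_injective _ hMinj, Finset.card_univ, Fintype.card_fin]
      ring
    · rw [Finset.disjoint_left]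
      rintro u hu1 hu2
      obtain ⟨a, -, rfl⟩ := Finset.mem_image.mp hu1
      obtain ⟨b, -, he⟩ := Finset.mem_image.mp hu2
      exact hPCne a b he.symm
    · rw [Finset.disjoint_union_left]
      constructor <;> rw [Finset.disjoint_left] <;> rintro u hu1 hu2 <;>
        obtain ⟨a, -, rfl⟩ := Finset.mem_image.mp hu1 <;>
        obtain ⟨b, -, he⟩ := Finset.mem_image.mp hu2
      · exact hPM a b he.symm
      · exact hMCne b a he
  have hDccard : Dᶜ.card = n - 3 * q := by
    rw [Finset.card_compl, hDcard, Fintype.card_fin]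
  set V := Dᶜ.orderIsoOfFin hDccard with hV
  -- seat-to-diner assignment before rotation
  set g : Fin n → Fin n := fun s =>
    if h : (s : ℕ) < 3 * q then
      (if (s : ℕ) % 3 = 0 then P ⟨(s : ℕ) / 3, by omega⟩
       else if (s : ℕ) % 3 = 1 then C ⟨(s : ℕ) / 3, by omega⟩
       else M ⟨(s : ℕ) / 3, by omega⟩)
    else (V ⟨(s : ℕ) - 3 * q, by have := s.isLt; omega⟩ : Fin n) with hg
  have hVD : ∀ (i : Fin (n - 3 * q)), ((V i : Fin n) ∈ D) → False := by
    intro i hmem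
    have := (V i).2
    rw [Finset.mem_compl] at this
    exact this hmem
  have hginj : Function.Injective g := by
    intro s t he
    rw [hg] at he
    dsimp only at he
    by_cases hs : (s : ℕ) < 3 * q <;> by_cases ht : (t : ℕ) < 3 * q
    · rw [dif_pos hs, dif_pos ht] at he
      have hs3 := Nat.mod_lt (s : ℕ) (show 0 < 3 by norm_num)
      have ht3 := Nat.mod_lt (t : ℕ) (show 0 < 3 by norm_num)
      split_ifs at he <;>
      first
        | exact absurd he (hPCne _ _)
        | exact absurd he.symm (hPCne _ _)
        | exact absurd he (hPM _ _)
        | exact absurd he.symm (hPM _ _)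
        | exact absurd he (hMCne _ _)
        | exact absurd he.symm (hMCne _ _)
        | (apply Fin.ext
           first
             | (have hvv := congrArg Fin.val (hPinj he)
                simp only [Fin.val_mk] at hvv
                omega)
             | (have hvv := congrArg Fin.val (hCinj he)
                simp only [Fin.val_mk] at hvv
                omega)
             | (have hvv := congrArg Fin.val (hMinj he)
                simp only [Fin.val_mk] at hvv
                omega))
    · rw [dif_pos hs, dif_neg ht] at he
      exfalso
      apply hVD ⟨(t : ℕ) - 3 * q, by have := t.isLt; omega⟩
      rw [← he]
      split_ifs <;> [exact hPD _; exact hCD _; exact hMD _]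
    · rw [dif_neg hs, dif_pos ht] at he
      exfalso
      apply hVD ⟨(s : ℕ) - 3 * q, by have := s.isLt; omega⟩
      rw [he]
      split_ifs <;> [exact hPD _; exact hCD _; exact hMD _]
    · rw [dif_neg hs, dif_neg ht] at he
      have h1 := V.injective (Subtype.coe_injective he)
      rw [Fin.mk.injEq] at h1
      apply Fin.ext
      have hsl := s.isLt
      have htl := t.isLt
      omega
  have hgbij : Function.Bijective g := Finite.injective_iff_bijective.mp hginj
  set e : Equiv.Perm (Fin n) := Equiv.ofBijective g hgbij with he_def
  have he_app : ∀ s, e s = g s := fun s => rfl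
  set s0 : Fin n := e.symm 0 with hs0
  set w : Equiv.Perm (Fin n) := (Equiv.addRight s0).trans e with hw
  have hw_app : ∀ s, w s = g (s + s0) := fun s => rfl
  have hw_symm : ∀ d, w.symm d = e.symm d - s0 := by
    intro d
    rw [hw, Equiv.symm_trans_apply]
    rw [Equiv.symm_apply_eq]
    simp [sub_add_cancel]
  -- block seat values
  have hblock : ∀ (k : Fin q) (i : ℕ) (hi : i < 3),
      (3 * (k : ℕ) + i) < n := by
    intro k i hi
    have := k.isLt
    omega
  have hgP : ∀ k : Fin q, g ⟨3 * (k : ℕ), hblock k 0 (by norm_num) ⟩ = P k := by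
    intro k
    have hk := k.isLt
    simp only [hg, Fin.val_mk]
    rw [dif_pos (show 3 * (k : ℕ) < 3 * q by omega)]
    rw [if_pos (show 3 * (k : ℕ) % 3 = 0 by omega)]
    congr 1
    apply Fin.ext
    simp only [Fin.val_mk]
    omega
  have hgC : ∀ k : Fin q, g ⟨3 * (k : ℕ) + 1, hblock k 1 (by norm_num)⟩ = C k := by
    intro k
    have hk := k.isLt
    simp only [hg, Fin.val_mk]
    rw [dif_pos (show 3 * (k : ℕ) + 1 < 3 * q by omega)]
    rw [if_neg (show ¬ (3 * (k : ℕ) + 1) % 3 = 0 by omega),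
      if_pos (show (3 * (k : ℕ) + 1) % 3 = 1 by omega)]
    congr 1
    apply Fin.ext
    simp only [Fin.val_mk]
    omega
  have hgM : ∀ k : Fin q, g ⟨3 * (k : ℕ) + 2, hblock k 2 (by norm_num)⟩ = M k := by
    intro k
    have hk := k.isLt
    simp only [hg, Fin.val_mk]
    rw [dif_pos (show 3 * (k : ℕ) + 2 < 3 * q by omega)]
    rw [if_neg (show ¬ (3 * (k : ℕ) + 2) % 3 = 0 by omega),
      if_neg (show ¬ (3 * (k : ℕ) + 2) % 3 = 1 by omega)]
    congr 1
    apply Fin.ext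
    simp only [Fin.val_mk]
    omega
  -- seat positions
  have hseatP : ∀ k : Fin q, w.symm (P k) = ⟨3 * (k : ℕ), hblock k 0 (by norm_num)⟩ - s0 := by
    intro k
    rw [hw_symm]
    congr 1
    rw [Equiv.symm_apply_eq, he_app, hgP]
  have hseatC : ∀ k : Fin q, w.symm (C k) = ⟨3 * (k : ℕ) + 1, hblock k 1 (by norm_num)⟩ - s0 := by
    intro k
    rw [hw_symm]
    congr 1
    rw [Equiv.symm_apply_eq, he_app, hgC]
  have hseatM : ∀ k : Fin q, w.symm (M k) = ⟨3 * (k : ℕ) + 2, hblock k 2 (by norm_num)⟩ - s0 := by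
    intro k
    rw [hw_symm]
    congr 1
    rw [Equiv.symm_apply_eq, he_app, hgM]
  -- Fin arithmetic between block values
  have hfin1 : ∀ k : Fin q, (⟨3 * (k : ℕ) + 1, hblock k 1 (by norm_num)⟩ : Fin n)
      = ⟨3 * (k : ℕ), hblock k 0 (by norm_num)⟩ + 1 := by
    intro k
    have hk := k.isLt
    have h1 : 1 % n = 1 := Nat.mod_eq_of_lt (by omega)
    apply Fin.ext
    simp only [Fin.val_add, Fin.val_one', Fin.val_mk]
    rw [h1, Nat.mod_eq_of_lt (by omega)]
  have hfin2 : ∀ k : Fin q, (⟨3 * (k : ℕ) + 2, hblock k 2 (by norm_num)⟩ : Fin n)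
      = ⟨3 * (k : ℕ), hblock k 0 (by norm_num)⟩ + 2 := by
    intro k
    have hk := k.isLt
    apply Fin.ext
    simp only [Fin.val_add, Fin.val_mk]
    rw [two_val_fin hn3, Nat.mod_eq_of_lt (by omega)]
  -- starve each C k
  have hstarve : ∀ k : Fin q, C k ∈ napkinless σ w := by
    intro k
    apply core_starve σ w (P k) (M k) (C k) (hσP k) (hσM k) (hPC k) (hMC k)
    · rw [hseatC, hseatP, hfin1]
      ring
    · rw [hseatM, hseatP, hfin2]
      ring
  -- conclude
  refine ⟨w, ?_, ?_⟩
  · intro i hi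
    have hi0 : i = 0 := Fin.ext (by rw [hi]; simp)
    subst hi0
    rw [hw_app, zero_add]
    show ((e (e.symm 0) : Fin n) : ℕ) = 0
    rw [Equiv.apply_symm_apply]
    rfl
  · have hsub : Finset.univ.image C ⊆ napkinless σ w := by
      intro u hu
      obtain ⟨k, -, rfl⟩ := Finset.mem_image.mp hu
      exact hstarve k
    have := Finset.card_le_card hsub
    rw [Finset.card_image_of_injective _ hCinj, Finset.card_univ, Fintype.card_fin] at this
    exact this

end Construction

/-- Write `n = 3q + r` with `q = ⌊n/3⌋` and let
`h = max(h(σ), h(-σ))`.  If `h ≤ q + r` then `ν_max(σ) = q`. -/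
theorem statement7 (n q r : ℕ) (hn : 1 ≤ n) (hq : q = n / 3) (hnr : n = 3 * q + r)
    (σ : Fin n → Bool) (h : ℕ) (hmax : h = max (drift σ) (drift fun j => !σ j))
    (hle : h ≤ q + r) :
    nuMax σ = q := by
  haveI : NeZero n := ⟨by omega⟩
  have hd1 : drift σ ≤ q + r := le_trans (le_max_left _ _) (hmax ▸ hle)
  have hd2 : drift (fun j => !σ j) ≤ q + r := le_trans (le_max_right _ _) (hmax ▸ hle)
  unfold drift at hd1 hd2
  have hsgn : ∀ b, sign (!b) = - sign b := by intro b; cases b <;> simp [sign]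
  have hS : ∀ t : ℕ, t ≤ n →
      |∑ j ∈ Finset.univ.filter (fun j : Fin n => (j : ℕ) < t), sign (σ j)| ≤ (q : ℤ) + r := by
    intro t ht
    have h1 : (∑ j ∈ Finset.univ.filter (fun j : Fin n => (j : ℕ) < t), sign (σ j)).toNat
        ≤ q + r := by
      exact le_trans (Finset.le_sup
        (f := fun i => (∑ j ∈ Finset.univ.filter (fun j : Fin n => (j : ℕ) < i), sign (σ j)).toNat)
        (Finset.mem_range.mpr (show t < n + 1 by omega))) hd1
    have h2 : (∑ j ∈ Finset.univ.filter (fun j : Fin n => (j : ℕ) < t), sign ((fun j => !σ j) j)).toNat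
        ≤ q + r := by
      exact le_trans (Finset.le_sup
        (f := fun i => (∑ j ∈ Finset.univ.filter (fun j : Fin n => (j : ℕ) < i), sign ((fun j => !σ j) j)).toNat)
        (Finset.mem_range.mpr (show t < n + 1 by omega))) hd2
    have hneg : (∑ j ∈ Finset.univ.filter (fun j : Fin n => (j : ℕ) < t), sign ((fun j => !σ j) j))
        = - ∑ j ∈ Finset.univ.filter (fun j : Fin n => (j : ℕ) < t), sign (σ j) := by
      rw [← Finset.sum_neg_distrib]
      exact Finset.sum_congr rfl (fun j _ => hsgn (σ j))
    rw [hneg] at h2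
    rw [Int.toNat_le] at h1 h2
    rw [abs_le]
    constructor
    · push_cast at h2 ⊢
      linarith
    · push_cast at h1 ⊢
      linarith
  have hub : ∀ w' : Equiv.Perm (Fin n), nu σ w' ≤ q := by
    intro w'
    have := nu_le_third σ w'
    omega
  have hupper : nuMax σ ≤ q := Finset.sup_le (fun w' _ => hub w')
  obtain ⟨P, M, C, h1, h2, h3, h4, h5, h6, h7, h8, h9, h10⟩ :=
    exists_feeders σ q r hnr hS
  obtain ⟨w, hws, hwn⟩ := exists_seating σ q r hnr P M C h1 h2 h3 h4 h5 h6 h7 h8 h9 h10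
  have hlower : q ≤ nuMax σ := by
    refine le_trans hwn (Finset.le_sup ?_)
    rw [Finset.mem_filter]
    exact ⟨Finset.mem_univ _, hws⟩
  omega

end Napkin
end
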